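/- arXiv:1312.6049 — 8 statements merged into one kernel-verified Lean document; each statement's English description precedes it below -/
import Mathlib

section
/- Let α ≠ 0 be a real number. A triple of real numbers (λ, μ, ν) satisfies the system of three equations: −2λ + (α/2)S² − αλS − αQ + αλ² = 0, −2μ + (α/2)S² − αμS − αQ + αμ² = 0, and −2ν + (α/2)S² − ανS − αQ + αν² = 0, where S = λ + μ + ν and Q = λ² + μ² + ν², if and only if (λ, μ, ν) is a permutation of one of the four triples (0, 0, 0), (−4/α, −4/α, −4/α), (−2/α, −2/α, 0), (−4/α, −2/α, −2/α). -/
set_option maxHeartbeats 1600000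

private lemma rg2_perm2 {x y b c : ℝ} : ([b, c] : List ℝ).Perm [x, y] ↔
    (b = x ∧ c = y) ∨ (b = y ∧ c = x) := by
  constructor
  · intro h
    have hb : b ∈ [x, y] := h.mem_iff.mp (by simp)
    simp at hb
    rcases hb with hb | hb
    · have h1 : ([x, c] : List ℝ).Perm [x, y] := hb ▸ h
      have hc : ([c] : List ℝ) = [y] := List.perm_singleton.mp h1.cons_inv
      simp at hc; exact Or.inl ⟨hb, hc⟩
    · have h1 : ([y, c] : List ℝ).Perm [x, y] := hb ▸ h
      have h2 : ([y, c] : List ℝ).Perm [y, x] := h1.trans (List.Perm.swap y x [])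
      have hc : ([c] : List ℝ) = [x] := List.perm_singleton.mp h2.cons_inv
      simp at hc; exact Or.inr ⟨hb, hc⟩
  · rintro (⟨rfl, rfl⟩ | ⟨rfl, rfl⟩)
    · exact List.Perm.refl _
    · exact List.Perm.swap _ _ _

private lemma rg2_perm3 {x y z a b c : ℝ} : ([a, b, c] : List ℝ).Perm [x, y, z] ↔
    (a = x ∧ b = y ∧ c = z) ∨ (a = x ∧ b = z ∧ c = y) ∨
    (a = y ∧ b = x ∧ c = z) ∨ (a = y ∧ b = z ∧ c = x) ∨
    (a = z ∧ b = x ∧ c = y) ∨ (a = z ∧ b = y ∧ c = x) := by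
  constructor
  · intro h
    have ha : a ∈ [x, y, z] := h.mem_iff.mp (by simp)
    simp at ha
    rcases ha with ha | ha | ha
    · have h1 : ([x, b, c] : List ℝ).Perm [x, y, z] := ha ▸ h
      have := rg2_perm2.mp h1.cons_inv
      tauto
    · have h1 : ([y, b, c] : List ℝ).Perm [x, y, z] := ha ▸ h
      have h2 : ([y, b, c] : List ℝ).Perm [y, x, z] :=
        h1.trans (List.Perm.swap y x [z])
      have := rg2_perm2.mp h2.cons_inv
      tauto
    · have h1 : ([z, b, c] : List ℝ).Perm [x, y, z] := ha ▸ h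
      have s1 : ([x, y, z] : List ℝ).Perm [x, z, y] :=
        List.Perm.cons x (List.Perm.swap z y [])
      have s2 : ([x, z, y] : List ℝ).Perm [z, x, y] := List.Perm.swap z x [y]
      have h2 : ([z, b, c] : List ℝ).Perm [z, x, y] := (h1.trans s1).trans s2
      have := rg2_perm2.mp h2.cons_inv
      tauto
  · have pyxz : ([y, x, z] : List ℝ).Perm [x, y, z] := List.Perm.swap x y [z]
    have pxzy : ([x, z, y] : List ℝ).Perm [x, y, z] :=
      List.Perm.cons x (List.Perm.swap y z [])
    have pyzx : ([y, z, x] : List ℝ).Perm [x, y, z] :=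
      (List.Perm.cons y (List.Perm.swap x z [])).trans pyxz
    have pzxy : ([z, x, y] : List ℝ).Perm [x, y, z] :=
      (List.Perm.swap x z [y]).trans pxzy
    have pzyx : ([z, y, x] : List ℝ).Perm [x, y, z] :=
      (List.Perm.swap y z [x]).trans pyzx
    rintro (⟨rfl, rfl, rfl⟩ | ⟨rfl, rfl, rfl⟩ | ⟨rfl, rfl, rfl⟩ |
      ⟨rfl, rfl, rfl⟩ | ⟨rfl, rfl, rfl⟩ | ⟨rfl, rfl, rfl⟩) <;>
      first
      | exact List.Perm.refl _
      | assumption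

/-- If two of the eigenvalues equal `-2/α`, the equation for the third forces it to be
`0` or `-4/α`. -/
private lemma rg2_aux_two (α l m n : ℝ) (hα : α ≠ 0)
    (hl : α * l = -2) (hm : α * m = -2)
    (e3 : -2*n + α/2*(l + m + n)^2 - α*n*(l + m + n) - α*(l^2 + m^2 + n^2) + α*n^2 = 0) :
    n = 0 ∨ n = -4/α := by
  have hl' : l = -2/α := by rw [eq_div_iff hα]; linear_combination hl
  have hm' : m = -2/α := by rw [eq_div_iff hα]; linear_combination hm
  subst hl' hm'
  field_simp at e3
  have key : α^8 * (n * (α*n + 4)) = 0 := by linear_combination -α^7 * e3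
  rcases mul_eq_zero.mp key with h | h
  · exact absurd h (pow_ne_zero _ hα)
  · rcases mul_eq_zero.mp h with h | h
    · exact Or.inl h
    · right; rw [eq_div_iff hα]; linarith

/-- All three eigenvalues cannot equal `-2/α`. -/
private lemma rg2_aux_contra (α l m n : ℝ) (hα : α ≠ 0)
    (hl : α * l = -2) (hm : α * m = -2) (hn : α * n = -2)
    (e1 : -2*l + α/2*(l + m + n)^2 - α*l*(l + m + n) - α*(l^2 + m^2 + n^2) + α*l^2 = 0) :
    False := by
  have hl' : l = -2/α := by rw [eq_div_iff hα]; linear_combination hl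
  have hm' : m = -2/α := by rw [eq_div_iff hα]; linear_combination hm
  have hn' : n = -2/α := by rw [eq_div_iff hα]; linear_combination hn
  subst hl' hm' hn'
  field_simp at e1
  ring_nf at e1
  have : α ^ 14 = 0 := by linarith
  exact pow_ne_zero _ hα this

/-- In the totally degenerate case the common eigenvalue is `0` or `-4/α`. -/
private lemma rg2_aux_all (α x : ℝ) (hα : α ≠ 0)
    (e : -2*x + α/2*(x + x + x)^2 - α*x*(x + x + x) - α*(x^2 + x^2 + x^2) + α*x^2 = 0) :
    x = 0 ∨ x = -4/α := by
  have key : x * (α*x + 4) = 0 := by linear_combination -2*e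
  rcases mul_eq_zero.mp key with h | h
  · exact Or.inl h
  · right; rw [eq_div_iff hα]; linarith

/-- Fixed point condition for the RG-2 flow in dimension 3, written in terms of the
eigenvalues `l, m, n` (λ, μ, ν) of the Ricci tensor: the algebraic system holds iff
(λ, μ, ν) is a permutation of one of four explicit triples. -/
theorem rg2_fixed_point_eigenvalues (α l m n : ℝ) (hα : α ≠ 0) :
    (-2*l + α/2*(l + m + n)^2 - α*l*(l + m + n) - α*(l^2 + m^2 + n^2) + α*l^2 = 0 ∧
     -2*m + α/2*(l + m + n)^2 - α*m*(l + m + n) - α*(l^2 + m^2 + n^2) + α*m^2 = 0 ∧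
     -2*n + α/2*(l + m + n)^2 - α*n*(l + m + n) - α*(l^2 + m^2 + n^2) + α*n^2 = 0) ↔
    (([l, m, n] : List ℝ).Perm [0, 0, 0] ∨
     ([l, m, n] : List ℝ).Perm [-4/α, -4/α, -4/α] ∨
     ([l, m, n] : List ℝ).Perm [-2/α, -2/α, 0] ∨
     ([l, m, n] : List ℝ).Perm [-4/α, -2/α, -2/α]) := by
  constructor
  · rintro ⟨e1, e2, e3⟩
    have d1 : (l - m) * (2 + α*n) = 0 := by linear_combination e2 - e1
    have d2 : (m - n) * (2 + α*l) = 0 := by linear_combination e3 - e2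
    have d3 : (l - n) * (2 + α*m) = 0 := by linear_combination e3 - e1
    rcases mul_eq_zero.mp d1 with h1 | h1
    · -- l = m
      have hlm : l = m := by linarith
      rcases mul_eq_zero.mp d2 with h2 | h2
      · -- m = n : all equal
        have hmn : m = n := by linarith
        subst hlm hmn
        rcases rg2_aux_all α l hα e1 with h | h
        · exact Or.inl (rg2_perm3.mpr (Or.inl ⟨h, h, h⟩))
        · exact Or.inr (Or.inl (rg2_perm3.mpr (Or.inl ⟨h, h, h⟩)))
      · -- α*l = -2, l = m
        have hl : α * l = -2 := by linarith
        have hm : α * m = -2 := by rw [← hlm]; exact hl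
        have hl' : l = -2/α := by rw [eq_div_iff hα]; linear_combination hl
        have hm' : m = -2/α := by rw [eq_div_iff hα]; linear_combination hm
        rcases rg2_aux_two α l m n hα hl hm e3 with h | h
        · exact Or.inr (Or.inr (Or.inl (rg2_perm3.mpr (by tauto))))
        · exact Or.inr (Or.inr (Or.inr (rg2_perm3.mpr (by tauto))))
    · -- α*n = -2
      have hn : α * n = -2 := by linarith
      have hn' : n = -2/α := by rw [eq_div_iff hα]; linear_combination hn
      rcases mul_eq_zero.mp d3 with h3 | h3
      · -- l = n
        have hln : l = n := by linarith
        have hl : α * l = -2 := by rw [hln]; exact hn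
        have hl' : l = -2/α := by rw [eq_div_iff hα]; linear_combination hl
        rcases mul_eq_zero.mp d2 with h2 | h2
        · -- m = n : all three equal -2/α, contradiction
          have hm : α * m = -2 := by rw [show m = n by linarith]; exact hn
          exact (rg2_aux_contra α l m n hα hl hm hn e1).elim
        · -- solve for m from e2
          have e2' : -2*m + α/2*(l + n + m)^2 - α*m*(l + n + m)
              - α*(l^2 + n^2 + m^2) + α*m^2 = 0 := by linear_combination e2
          rcases rg2_aux_two α l n m hα hl hn e2' with h | h
          · exact Or.inr (Or.inr (Or.inl (rg2_perm3.mpr (by tauto))))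
          · exact Or.inr (Or.inr (Or.inr (rg2_perm3.mpr (by tauto))))
      · -- α*m = -2
        have hm : α * m = -2 := by linarith
        have hm' : m = -2/α := by rw [eq_div_iff hα]; linear_combination hm
        rcases mul_eq_zero.mp d2 with h2 | h2
        · -- m = n, solve for l from e1
          have e1' : -2*l + α/2*(m + n + l)^2 - α*l*(m + n + l)
              - α*(m^2 + n^2 + l^2) + α*l^2 = 0 := by linear_combination e1
          rcases rg2_aux_two α m n l hα hm hn e1' with h | h
          · exact Or.inr (Or.inr (Or.inl (rg2_perm3.mpr (by tauto))))
          · exact Or.inr (Or.inr (Or.inr (rg2_perm3.mpr (by tauto))))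
        · -- α*l = -2 : all three equal -2/α, contradiction
          have hl : α * l = -2 := by linarith
          exact (rg2_aux_contra α l m n hα hl hm hn e1).elim
  · rintro (h | h | h | h) <;> rw [rg2_perm3] at h <;>
      rcases h with ⟨rfl, rfl, rfl⟩ | ⟨rfl, rfl, rfl⟩ | ⟨rfl, rfl, rfl⟩ |
        ⟨rfl, rfl, rfl⟩ | ⟨rfl, rfl, rfl⟩ | ⟨rfl, rfl, rfl⟩ <;>
      refine ⟨?_, ?_, ?_⟩ <;> (field_simp <;> ring)
end

section
/- Let n ≥ 2 be an integer, α > 0 and K real constants with K ≠ 0 and 2 + αK ≠ 0. Suppose φ : [0, T) → ℝ is differentiable with φ(0) = 1, and for all t ∈ [0, T) one has φ(t) > 0, 2φ(t) + αK ≠ 0, and φ'(t) = −2K(n−1) − (α/φ(t))·K²(n−1). Then for all t ∈ [0, T): φ(t) = −2K(n−1)·t + 1 + (αK/2)·ln|(2φ(t) + αK)/(2 + αK)|. -/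
/-- The implicit solution formula (via the Lambert W relation) for the RG-2
constant-curvature conformal factor ODE
`φ'(t) = −2K(n−1) − (α/φ(t))·K²(n−1)` with `φ(0) = 1`. -/
theorem rg2_constant_curvature_implicit_solution
    (n : ℕ) (hn : 2 ≤ n) (α K T : ℝ) (hα : 0 < α) (hK : K ≠ 0)
    (h2 : 2 + α * K ≠ 0) (φ : ℝ → ℝ) (hφ0 : φ 0 = 1)
    (hpos : ∀ t ∈ Set.Ico (0 : ℝ) T, 0 < φ t)
    (hne : ∀ t ∈ Set.Ico (0 : ℝ) T, 2 * φ t + α * K ≠ 0)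
    (hderiv : ∀ t ∈ Set.Ico (0 : ℝ) T,
      HasDerivAt φ (-2 * K * ((n : ℝ) - 1) - α / φ t * K ^ 2 * ((n : ℝ) - 1)) t) :
    ∀ t ∈ Set.Ico (0 : ℝ) T,
      φ t = -2 * K * ((n : ℝ) - 1) * t + 1 +
        α * K / 2 * Real.log |(2 * φ t + α * K) / (2 + α * K)| := by
  intro t ht
  obtain ⟨ht0, htT⟩ := ht
  set c : ℝ := -2 * K * ((n : ℝ) - 1) with hc
  set G : ℝ → ℝ := fun x => φ x - α * K / 2 * Real.log (2 * φ x + α * K) - c * x with hG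
  have hGd : ∀ x ∈ Set.Ico (0 : ℝ) T, HasDerivAt G 0 x := by
    intro x hx
    have hφpos := hpos x hx
    have hφne := hne x hx
    have hd := hderiv x hx
    have hlog : HasDerivAt (fun y => Real.log (2 * φ y + α * K))
        ((2 * (c - α / φ x * K ^ 2 * ((n : ℝ) - 1))) / (2 * φ x + α * K)) x := by
      have := ((hd.const_mul 2).add_const (α * K)).log hφne
      simpa using this
    have hG' : HasDerivAt G
        ((c - α / φ x * K ^ 2 * ((n : ℝ) - 1))
          - α * K / 2 * ((2 * (c - α / φ x * K ^ 2 * ((n : ℝ) - 1))) / (2 * φ x + α * K))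
          - c * 1) x :=
      (hd.sub (hlog.const_mul (α * K / 2))).sub ((hasDerivAt_id x).const_mul c)
    convert hG' using 1
    rw [hc]
    field_simp [hφpos.ne', show 2 * φ x + K * α ≠ 0 by rwa [mul_comm K α]]
    ring
  have hsub : Set.Icc (0 : ℝ) t ⊆ Set.Ico (0 : ℝ) T :=
    fun x hx => ⟨hx.1, lt_of_le_of_lt hx.2 htT⟩
  have hconst : G t = G 0 := by
    have := constant_of_has_deriv_right_zero
      (f := G) (a := 0) (b := t)
      (fun x hx => (hGd x (hsub hx)).continuousAt.continuousWithinAt)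
      (fun x hx => ((hGd x (hsub ⟨hx.1, hx.2.le⟩)).hasDerivWithinAt))
    exact this t ⟨ht0, le_refl t⟩
  have hφt := hne t ⟨ht0, htT⟩
  have hlogeq : Real.log |(2 * φ t + α * K) / (2 + α * K)|
      = Real.log (2 * φ t + α * K) - Real.log (2 + α * K) := by
    rw [Real.log_abs, Real.log_div hφt h2]
  rw [hlogeq]
  have hG0 : G 0 = 1 - α * K / 2 * Real.log (2 + α * K) := by
    simp [hG, hφ0]
  have hGt : G t = φ t - α * K / 2 * Real.log (2 * φ t + α * K) - c * t := rfl
  rw [hGt, hG0] at hconst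
  rw [hc] at hconst ⊢
  linarith [hconst]
end

section
/- Let n ≥ 2 be an integer, α > 0 and K real constants with K ≠ 0 and 2 + αK ≠ 0, and let T > 0 be finite. Suppose φ : [0, T) → ℝ is differentiable with φ(0) = 1, for all t ∈ [0, T) one has φ(t) > 0, 2φ(t) + αK ≠ 0, and φ'(t) = −2K(n−1) − (α/φ(t))·K²(n−1), and suppose φ(t) → 0 as t → T⁻. Then T = 1/(2K(n−1)) + (α/(4(n−1)))·ln|αK/(2 + αK)|. -/
/-- The extinction time of a constant curvature RG-2 solution: if the conformal
factor `φ` solving `φ'(t) = −2K(n−1) − (α/φ(t))·K²(n−1)`, `φ(0) = 1`, tends to `0`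
as `t → T⁻`, then `T = 1/(2K(n−1)) + (α/(4(n−1)))·ln|αK/(2+αK)|`. -/
theorem rg2_constant_curvature_extinction_time
    (n : ℕ) (hn : 2 ≤ n) (α K T : ℝ) (hα : 0 < α) (hK : K ≠ 0)
    (h2 : 2 + α * K ≠ 0) (hT : 0 < T) (φ : ℝ → ℝ) (hφ0 : φ 0 = 1)
    (hpos : ∀ t ∈ Set.Ico (0 : ℝ) T, 0 < φ t)
    (hne : ∀ t ∈ Set.Ico (0 : ℝ) T, 2 * φ t + α * K ≠ 0)
    (hderiv : ∀ t ∈ Set.Ico (0 : ℝ) T,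
      HasDerivAt φ (-2 * K * ((n : ℝ) - 1) - α / φ t * K ^ 2 * ((n : ℝ) - 1)) t)
    (hlim : Filter.Tendsto φ (nhdsWithin T (Set.Iio T)) (nhds 0)) :
    T = 1 / (2 * K * ((n : ℝ) - 1)) +
      α / (4 * ((n : ℝ) - 1)) * Real.log |α * K / (2 + α * K)| := by
  set m : ℝ := (n : ℝ) - 1 with hm_def
  have hn2 : (2 : ℝ) ≤ (n : ℝ) := by exact_mod_cast hn
  have hm : 0 < m := by simp only [hm_def]; linarith
  have hc : 2 * K * m ≠ 0 := by
    exact mul_ne_zero (mul_ne_zero two_ne_zero hK) hm.ne'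
  have hαK : α * K ≠ 0 := mul_ne_zero hα.ne' hK
  set G : ℝ → ℝ := fun t => t + φ t / (2 * K * m)
      - α / (4 * m) * Real.log (2 * φ t + α * K) with hG
  have hGd : ∀ t ∈ Set.Ico (0 : ℝ) T, HasDerivAt G 0 t := by
    intro t ht
    have hd := hderiv t ht
    have hφt := (hpos t ht).ne'
    have hnet := hne t ht
    have h3 : HasDerivAt (fun s => Real.log (2 * φ s + α * K))
        ((2 * (-2 * K * m - α / φ t * K ^ 2 * m)) / (2 * φ t + α * K)) t :=
      ((hd.const_mul 2).add_const (α * K)).log hnet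
    have h := ((hasDerivAt_id t).add (hd.div_const (2 * K * m))).sub
      (h3.const_mul (α / (4 * m)))
    refine h.congr_deriv ?_
    have hnet' : 2 * φ t + K * α ≠ 0 := by rw [mul_comm K]; exact hnet
    field_simp
    ring
  have hkey : ∀ s ∈ Set.Ico (0 : ℝ) T, G s = G 0 := by
    intro s hs
    have hcont : ContinuousOn G (Set.Icc 0 s) := fun x hx =>
      ((hGd x ⟨hx.1, lt_of_le_of_lt hx.2 hs.2⟩).continuousAt).continuousWithinAt
    have hdw : ∀ x ∈ Set.Ico (0 : ℝ) s, HasDerivWithinAt G 0 (Set.Ici x) x := fun x hx =>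
      (hGd x ⟨hx.1, hx.2.trans hs.2⟩).hasDerivWithinAt
    exact constant_of_has_deriv_right_zero hcont hdw s (Set.right_mem_Icc.mpr hs.1)
  -- limit of G at T from the left
  have htT : Filter.Tendsto (fun t : ℝ => t) (nhdsWithin T (Set.Iio T)) (nhds T) :=
    Filter.tendsto_id.mono_left nhdsWithin_le_nhds
  have hlog : Filter.Tendsto (fun t => Real.log (2 * φ t + α * K))
      (nhdsWithin T (Set.Iio T)) (nhds (Real.log (α * K))) := by
    have h1 : Filter.Tendsto (fun t => 2 * φ t + α * K)
        (nhdsWithin T (Set.Iio T)) (nhds (α * K)) := by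
      have := (hlim.const_mul 2).add_const (α * K)
      simpa using this
    exact ((Real.continuousAt_log hαK).tendsto.comp h1)
  have hGlim : Filter.Tendsto G (nhdsWithin T (Set.Iio T))
      (nhds (T + 0 / (2 * K * m) - α / (4 * m) * Real.log (α * K))) :=
    (htT.add (hlim.div_const _)).sub (hlog.const_mul _)
  have hGconst : Filter.Tendsto G (nhdsWithin T (Set.Iio T)) (nhds (G 0)) := by
    have hev : ∀ᶠ t in nhdsWithin T (Set.Iio T), G t = G 0 := by
      filter_upwards [Ioo_mem_nhdsLT_of_mem (Set.mem_Ioc.mpr ⟨hT, le_refl T⟩)] with t ht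
      exact hkey t ⟨ht.1.le, ht.2⟩
    exact tendsto_const_nhds.congr' (hev.mono fun t h => h.symm)
  have huniq := tendsto_nhds_unique hGlim hGconst
  have hG0 : G 0 = 1 / (2 * K * m) - α / (4 * m) * Real.log (2 + α * K) := by
    simp [hG, hφ0]
  rw [hG0] at huniq
  have hlogq : Real.log |α * K / (2 + α * K)|
      = Real.log (α * K) - Real.log (2 + α * K) := by
    rw [Real.log_abs, Real.log_div hαK h2]
  rw [hlogq]
  have : T + 0 / (2 * K * m) - α / (4 * m) * Real.log (α * K)
      = 1 / (2 * K * m) - α / (4 * m) * Real.log (2 + α * K) := huniq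
  rw [zero_div] at this
  linarith [this, mul_sub (α / (4 * m)) (Real.log (α * K)) (Real.log (2 + α * K))]
end

section
/- Let n ≥ 2 be an integer and let α > 0 and K > 0 be real numbers. Then the number T := 1/(2K(n−1)) + (α/(4(n−1)))·ln(αK/(2 + αK)) satisfies 0 < T < 1/(2K(n−1)). That is, the extinction time of a constant positive curvature RG-2 solution is positive, and is strictly less than the extinction time 1/(2K(n−1)) of the corresponding Ricci flow solution. -/
/-- For `K > 0` the RG-2 extinction time
`T = 1/(2K(n−1)) + (α/(4(n−1)))·ln(αK/(2+αK))` is positive and strictly smaller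
than the Ricci flow extinction time `1/(2K(n−1))`. -/
theorem rg2_extinction_time_positive_and_less_than_ricci
    (n : ℕ) (hn : 2 ≤ n) (α K : ℝ) (hα : 0 < α) (hK : 0 < K) :
    0 < 1 / (2 * K * ((n : ℝ) - 1)) +
        α / (4 * ((n : ℝ) - 1)) * Real.log (α * K / (2 + α * K)) ∧
    1 / (2 * K * ((n : ℝ) - 1)) +
        α / (4 * ((n : ℝ) - 1)) * Real.log (α * K / (2 + α * K)) <
      1 / (2 * K * ((n : ℝ) - 1)) := by
  have hc : (0:ℝ) < (n : ℝ) - 1 := by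
    have : (2:ℝ) ≤ (n : ℝ) := by exact_mod_cast hn
    linarith
  have hx : 0 < α * K := mul_pos hα hK
  have hden : 0 < 2 + α * K := by linarith
  have hratio_pos : 0 < α * K / (2 + α * K) := div_pos hx hden
  have hratio_lt : α * K / (2 + α * K) < 1 := (div_lt_one hden).mpr (by linarith)
  have hL : Real.log (α * K / (2 + α * K)) < 0 := Real.log_neg hratio_pos hratio_lt
  constructor
  · -- positivity: need α/(4c) * (-L) < 1/(2Kc)
    have hinv_pos : 0 < (2 + α * K) / (α * K) := div_pos hden hx
    have hgt1 : (1:ℝ) < (2 + α * K) / (α * K) := (one_lt_div hx).mpr (by linarith)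
    have hlog_lt : Real.log ((2 + α * K) / (α * K)) < (2 + α * K) / (α * K) - 1 :=
      Real.log_lt_sub_one_of_pos hinv_pos (ne_of_gt hgt1)
    have hneg : Real.log ((2 + α * K) / (α * K)) = -Real.log (α * K / (2 + α * K)) := by
      rw [← Real.log_inv]
      congr 1
      field_simp
    have hsub : (2 + α * K) / (α * K) - 1 = 2 / (α * K) := by
      field_simp
      ring
    have key : -Real.log (α * K / (2 + α * K)) < 2 / (α * K) := by
      rw [← hneg]; rw [hsub] at hlog_lt; exact hlog_lt
    have hcoef : 0 < α / (4 * ((n : ℝ) - 1)) := div_pos hα (by linarith)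
    have h2 : α / (4 * ((n : ℝ) - 1)) * (-Real.log (α * K / (2 + α * K))) <
        α / (4 * ((n : ℝ) - 1)) * (2 / (α * K)) :=
      mul_lt_mul_of_pos_left key hcoef
    have heq : α / (4 * ((n : ℝ) - 1)) * (2 / (α * K)) = 1 / (2 * K * ((n : ℝ) - 1)) := by
      field_simp
      ring
    rw [heq] at h2
    linarith
  · have hcoef : 0 < α / (4 * ((n : ℝ) - 1)) := div_pos hα (by linarith)
    nlinarith [mul_pos hcoef (neg_pos.mpr hL)]
end

section
/- Let n ≥ 2 be an integer, α > 0 and K < 0 real constants with 2 + αK > 0. Suppose φ : [0, T) → ℝ is differentiable with φ(0) = 1, and for all t ∈ [0, T) one has φ(t) > 0 and φ'(t) = −2K(n−1) − (α/φ(t))·K²(n−1). Then for all t ∈ [0, T): φ(t) ≥ 1, φ'(t) ≥ −K(n−1)(2 + αK) > 0, and hence φ(t) ≥ 1 − K(n−1)(2 + αK)·t; in particular φ is strictly increasing. -/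
/-- For `K < 0` with `2 + αK > 0` (small negative curvature), a positive solution
of the RG-2 conformal factor ODE expands: `φ ≥ 1`, `φ' ≥ −K(n−1)(2+αK) > 0`, hence
`φ(t) ≥ 1 − K(n−1)(2+αK)t`, and `φ` is strictly increasing. -/
theorem rg2_small_negative_curvature_expands
    (n : ℕ) (hn : 2 ≤ n) (α K T : ℝ) (hα : 0 < α) (hK : K < 0)
    (h2 : 0 < 2 + α * K) (φ : ℝ → ℝ) (hφ0 : φ 0 = 1)
    (hpos : ∀ t ∈ Set.Ico (0 : ℝ) T, 0 < φ t)
    (hderiv : ∀ t ∈ Set.Ico (0 : ℝ) T,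
      HasDerivAt φ (-2 * K * ((n : ℝ) - 1) - α / φ t * K ^ 2 * ((n : ℝ) - 1)) t) :
    (∀ t ∈ Set.Ico (0 : ℝ) T,
      1 ≤ φ t ∧
      -K * ((n : ℝ) - 1) * (2 + α * K) ≤ deriv φ t ∧
      1 - K * ((n : ℝ) - 1) * (2 + α * K) * t ≤ φ t) ∧
    0 < -K * ((n : ℝ) - 1) * (2 + α * K) ∧
    StrictMonoOn φ (Set.Ico (0 : ℝ) T) := by
  have hn1 : (1:ℝ) ≤ (n : ℝ) - 1 := by
    have : (2:ℝ) ≤ (n : ℝ) := by exact_mod_cast hn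
    linarith
  set b' : ℝ := (1 + (-α * K / 2)) / 2 with hb'def
  have hbpos : 0 < -α * K / 2 := by nlinarith
  have hb'pos : 0 < b' := by rw [hb'def]; linarith
  have hb'lt1 : b' < 1 := by rw [hb'def]; nlinarith
  have hbb' : -α * K / 2 < b' := by rw [hb'def]; nlinarith
  -- positivity of the RHS of the ODE whenever φ s > b'
  have hdpos : ∀ s ∈ Set.Ico (0:ℝ) T, b' < φ s →
      0 < -2 * K * ((n : ℝ) - 1) - α / φ s * K ^ 2 * ((n : ℝ) - 1) := by
    intro s hs hgt
    have hφ : 0 < φ s := lt_trans hb'pos hgt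
    have key : α / φ s * K ^ 2 < -2 * K := by
      rw [div_mul_eq_mul_div, div_lt_iff₀ hφ]
      nlinarith
    nlinarith
  have hcont : ContinuousOn φ (Set.Ico 0 T) := fun s hs =>
    ((hderiv s hs).continuousAt).continuousWithinAt
  -- invariance: φ stays above b' on [0, t] for t in [0, T)
  have hinv : ∀ t ∈ Set.Ico (0:ℝ) T, ∀ s ∈ Set.Icc (0:ℝ) t, b' < φ s := by
    intro t ht
    by_contra hcon
    push_neg at hcon
    obtain ⟨t1, ht1, hφt1⟩ := hcon
    have hsub : Set.Icc (0:ℝ) t ⊆ Set.Ico 0 T := fun s hs =>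
      ⟨hs.1, lt_of_le_of_lt hs.2 ht.2⟩
    set A : Set ℝ := Set.Icc (0:ℝ) t ∩ φ ⁻¹' Set.Iic b' with hAdef
    have hAne : A.Nonempty := ⟨t1, ht1, hφt1⟩
    have hAclosed : IsClosed A :=
      (hcont.mono hsub).preimage_isClosed_of_isClosed isClosed_Icc isClosed_Iic
    have hAbdd : BddBelow A := ⟨0, fun s hs => hs.1.1⟩
    set t0 : ℝ := sInf A with ht0def
    have ht0A : t0 ∈ A := hAclosed.csInf_mem hAne hAbdd
    have ht0Icc : t0 ∈ Set.Icc (0:ℝ) t := ht0A.1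
    have hφt0 : φ t0 ≤ b' := ht0A.2
    have ht0ne : t0 ≠ 0 := by
      intro h
      rw [h, hφ0] at hφt0
      linarith
    have ht0pos : 0 < t0 := lt_of_le_of_ne ht0Icc.1 (Ne.symm ht0ne)
    have hbefore : ∀ s ∈ Set.Ico (0:ℝ) t0, b' < φ s := by
      intro s hs
      by_contra hle
      push_neg at hle
      have : s ∈ A := ⟨⟨hs.1, le_trans hs.2.le ht0Icc.2⟩, hle⟩
      exact absurd (csInf_le hAbdd this) (not_le.mpr hs.2)
    have hmono : StrictMonoOn φ (Set.Icc 0 t0) := by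
      apply strictMonoOn_of_deriv_pos (convex_Icc 0 t0)
      · exact hcont.mono (fun s hs => hsub ⟨hs.1, le_trans hs.2 ht0Icc.2⟩)
      · intro s hs
        rw [interior_Icc] at hs
        have hsIco : s ∈ Set.Ico (0:ℝ) T :=
          ⟨hs.1.le, lt_of_lt_of_le hs.2 (le_trans ht0Icc.2 ht.2.le)⟩
        rw [(hderiv s hsIco).deriv]
        exact hdpos s hsIco (hbefore s ⟨hs.1.le, hs.2⟩)
    have : φ 0 < φ t0 :=
      hmono ⟨le_refl 0, ht0Icc.1⟩ ⟨ht0Icc.1, le_refl t0⟩ ht0pos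
    rw [hφ0] at this
    linarith
  -- φ ≥ 1 on [0, T)
  have hge1 : ∀ t ∈ Set.Ico (0:ℝ) T, 1 ≤ φ t := by
    intro t ht
    rcases eq_or_lt_of_le ht.1 with h | h
    · rw [← h, hφ0]
    · have hmono : StrictMonoOn φ (Set.Icc 0 t) := by
        apply strictMonoOn_of_deriv_pos (convex_Icc 0 t)
        · exact hcont.mono (fun s hs => ⟨hs.1, lt_of_le_of_lt hs.2 ht.2⟩)
        · intro s hs
          rw [interior_Icc] at hs
          have hsIco : s ∈ Set.Ico (0:ℝ) T := ⟨hs.1.le, lt_trans hs.2 ht.2⟩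
          rw [(hderiv s hsIco).deriv]
          exact hdpos s hsIco (hinv t ht s ⟨hs.1.le, hs.2.le⟩)
      have : φ 0 < φ t := hmono ⟨le_refl 0, ht.1⟩ ⟨ht.1, le_refl t⟩ h
      rw [hφ0] at this
      linarith
  -- the constant c is positive
  have hc : 0 < -K * ((n : ℝ) - 1) * (2 + α * K) := by
    have h1 : 0 < -K := by linarith
    positivity
  -- the pointwise derivative bound
  have hdge : ∀ t ∈ Set.Ico (0:ℝ) T,
      -K * ((n : ℝ) - 1) * (2 + α * K) ≤
        -2 * K * ((n : ℝ) - 1) - α / φ t * K ^ 2 * ((n : ℝ) - 1) := by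
    intro t ht
    have h1 : 1 ≤ φ t := hge1 t ht
    have hφ : 0 < φ t := hpos t ht
    have hdiv : α / φ t ≤ α := div_le_self hα.le h1
    have hK2 : (0:ℝ) ≤ K ^ 2 := sq_nonneg K
    have : α / φ t * K ^ 2 ≤ α * K ^ 2 := mul_le_mul_of_nonneg_right hdiv hK2
    nlinarith
  refine ⟨fun t ht => ⟨hge1 t ht, ?_, ?_⟩, hc, ?_⟩
  · rw [(hderiv t ht).deriv]
    exact hdge t ht
  · -- linear lower bound via monotonicity of g s = φ s - c s
    set c : ℝ := -K * ((n : ℝ) - 1) * (2 + α * K) with hcdef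
    rcases eq_or_lt_of_le ht.1 with h | h
    · rw [← h, hφ0]; simp
    · set g : ℝ → ℝ := fun s => φ s - c * s with hgdef
      have hg' : ∀ s ∈ Set.Ico (0:ℝ) T,
          HasDerivAt g (-2 * K * ((n : ℝ) - 1) - α / φ s * K ^ 2 * ((n : ℝ) - 1) - c) s := by
        intro s hs
        have := (hderiv s hs).sub ((hasDerivAt_id s).const_mul c)
        exact this.congr_deriv (by ring)
      have hsub : Set.Icc (0:ℝ) t ⊆ Set.Ico 0 T := fun s hs =>
        ⟨hs.1, lt_of_le_of_lt hs.2 ht.2⟩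
      have hgmono : MonotoneOn g (Set.Icc 0 t) := by
        apply monotoneOn_of_deriv_nonneg (convex_Icc 0 t)
        · intro s hs
          exact ((hg' s (hsub hs)).continuousAt).continuousWithinAt
        · intro s hs
          rw [interior_Icc] at hs
          exact ((hg' s (hsub ⟨hs.1.le, hs.2.le⟩)).differentiableAt).differentiableWithinAt
        · intro s hs
          rw [interior_Icc] at hs
          have hsIco : s ∈ Set.Ico (0:ℝ) T := hsub ⟨hs.1.le, hs.2.le⟩
          rw [(hg' s hsIco).deriv]
          have := hdge s hsIco
          linarith
      have := hgmono ⟨le_refl 0, ht.1⟩ ⟨ht.1, le_refl t⟩ ht.1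
      simp only [hgdef, hφ0, mul_zero, sub_zero] at this
      have hgoal : 1 + c * t ≤ φ t := by linarith
      calc 1 - K * ((n : ℝ) - 1) * (2 + α * K) * t = 1 + c * t := by rw [hcdef]; ring
        _ ≤ φ t := hgoal
  · apply strictMonoOn_of_deriv_pos (convex_Ico 0 T) hcont
    intro s hs
    rw [interior_Ico] at hs
    have hsIco : s ∈ Set.Ico (0:ℝ) T := ⟨hs.1.le, hs.2⟩
    rw [(hderiv s hsIco).deriv]
    have := hdge s hsIco
    linarith
end

section
/- Let α > 0 and c > 0 be real constants, and let φ : [0, S) → ℝ (with 0 < S ≤ ∞) be twice continuously differentiable with φ(0) = 0, φ'(0) = 1, 1 + 2cα·φ'(s) ≥ 0 for all s, and φ''(s) = (φ(s)/α)·(1 − √(1 + 2cα·φ'(s))) for all s ∈ [0, S). Then for all s ∈ (0, S): φ(s) > 0 and 0 < φ'(s) ≤ 1, and φ' is strictly decreasing on (0, S). -/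
open Set

/-- Key lemma: on any compact subinterval `[0, b]` of `[0, S)`, the derivative `φ'`
stays strictly positive. -/
private lemma rg2_key
    (α c : ℝ) (hα : 0 < α) (hc : 0 < c) (S : EReal)
    (φ φ' φ'' : ℝ → ℝ)
    (h0 : φ 0 = 0) (h1 : φ' 0 = 1)
    (hd1 : ∀ s ∈ {s : ℝ | 0 ≤ s ∧ (s : EReal) < S},
      HasDerivWithinAt φ (φ' s) {s : ℝ | 0 ≤ s ∧ (s : EReal) < S} s)
    (hd2 : ∀ s ∈ {s : ℝ | 0 ≤ s ∧ (s : EReal) < S},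
      HasDerivWithinAt φ' (φ'' s) {s : ℝ | 0 ≤ s ∧ (s : EReal) < S} s)
    (hode : ∀ s ∈ {s : ℝ | 0 ≤ s ∧ (s : EReal) < S},
      φ'' s = φ s / α * (1 - Real.sqrt (1 + 2 * c * α * φ' s)))
    (b : ℝ) (hb0 : 0 ≤ b) (hbS : (b : EReal) < S) :
    ∀ s ∈ Icc (0:ℝ) b, 0 < φ' s := by
  set I : Set ℝ := {s : ℝ | 0 ≤ s ∧ (s : EReal) < S} with hI
  have hsub : Icc (0:ℝ) b ⊆ I := by
    intro t ht
    exact ⟨ht.1, lt_of_le_of_lt (EReal.coe_le_coe_iff.2 ht.2) hbS⟩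
  -- membership in nhds: if 0 < t < b then I ∈ 𝓝 t
  have hnhds : ∀ t : ℝ, 0 < t → t < b → I ∈ nhds t := by
    intro t ht0 htb
    have : Ioo (0:ℝ) b ⊆ I := by
      intro u hu
      exact ⟨hu.1.le, lt_of_le_of_lt (EReal.coe_le_coe_iff.2 hu.2.le) hbS⟩
    exact Filter.mem_of_superset (isOpen_Ioo.mem_nhds ⟨ht0, htb⟩) this
  have hφcont : ContinuousOn φ (Icc (0:ℝ) b) := fun t ht =>
    ((hd1 t (hsub ht)).mono hsub).differentiableWithinAt.continuousWithinAt
  have hφ'cont : ContinuousOn φ' (Icc (0:ℝ) b) := fun t ht =>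
    ((hd2 t (hsub ht)).mono hsub).differentiableWithinAt.continuousWithinAt
  by_contra hcon
  push_neg at hcon
  obtain ⟨s₀, hs₀, hs₀le⟩ := hcon
  set A : Set ℝ := Icc (0:ℝ) b ∩ φ' ⁻¹' Iic 0 with hA
  have hAne : A.Nonempty := ⟨s₀, hs₀, hs₀le⟩
  have hAclosed : IsClosed A :=
    hφ'cont.preimage_isClosed_of_isClosed isClosed_Icc isClosed_Iic
  have hAbdd : BddBelow A := ⟨0, fun t ht => ht.1.1⟩
  set T := sInf A with hT
  have hTA : T ∈ A := hAclosed.csInf_mem hAne hAbdd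
  have hT0 : 0 ≤ T := hTA.1.1
  have hTb : T ≤ b := hTA.1.2
  have hTpos : 0 < T := by
    rcases hT0.lt_or_eq with h | h
    · exact h
    · exfalso
      have h2 : φ' T ≤ 0 := hTA.2
      rw [← h, h1] at h2
      linarith
  -- on [0, T), φ' > 0
  have hφ'pos : ∀ t, 0 ≤ t → t < T → 0 < φ' t := by
    intro t ht0 htT
    by_contra h
    push_neg at h
    have : t ∈ A := ⟨⟨ht0, htT.le.trans hTb⟩, h⟩
    exact absurd (csInf_le hAbdd this) (not_le.2 htT)
  have hsubT : Icc (0:ℝ) T ⊆ Icc (0:ℝ) b := Icc_subset_Icc le_rfl hTb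
  -- deriv of φ at interior points of [0,T]
  have hderivφ : ∀ t ∈ Ioo (0:ℝ) T, HasDerivAt φ (φ' t) t := by
    intro t ht
    exact (hd1 t (hsub (hsubT ⟨ht.1.le, ht.2.le⟩))).hasDerivAt
      (hnhds t ht.1 (lt_of_lt_of_le ht.2 hTb))
  have hderivφ' : ∀ t ∈ Ioo (0:ℝ) T, HasDerivAt φ' (φ'' t) t := by
    intro t ht
    exact (hd2 t (hsub (hsubT ⟨ht.1.le, ht.2.le⟩))).hasDerivAt
      (hnhds t ht.1 (lt_of_lt_of_le ht.2 hTb))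
  -- φ is monotone on [0, T]
  have hφmono : MonotoneOn φ (Icc (0:ℝ) T) := by
    apply monotoneOn_of_deriv_nonneg (convex_Icc _ _) (hφcont.mono hsubT)
    · intro t ht
      rw [interior_Icc] at ht
      exact (hderivφ t ht).differentiableAt.differentiableWithinAt
    · intro t ht
      rw [interior_Icc] at ht
      rw [(hderivφ t ht).deriv]
      exact (hφ'pos t ht.1.le ht.2).le
  have hφ0T : ∀ t ∈ Icc (0:ℝ) T, 0 ≤ φ t ∧ φ t ≤ φ T := by
    intro t ht
    constructor
    · have := hφmono (left_mem_Icc.2 hT0) ht ht.1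
      rwa [h0] at this
    · exact hφmono ht (right_mem_Icc.2 hT0) ht.2
  have hφT0 : 0 ≤ φ T := by
    have := hφmono (left_mem_Icc.2 hT0) (right_mem_Icc.2 hT0) hT0
    rwa [h0] at this
  set K := c * φ T with hK
  have hK0 : 0 ≤ K := mul_nonneg hc.le hφT0
  -- g = exp(K s) * φ' s is monotone on [0, T]
  set g : ℝ → ℝ := fun s => Real.exp (K * s) * φ' s with hg
  have hgmono : MonotoneOn g (Icc (0:ℝ) T) := by
    have hderivg : ∀ t ∈ Ioo (0:ℝ) T,
        HasDerivAt g (K * Real.exp (K * t) * φ' t + Real.exp (K * t) * φ'' t) t := by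
      intro t ht
      have he : HasDerivAt (fun s : ℝ => Real.exp (K * s)) (K * Real.exp (K * t)) t := by
        have := ((hasDerivAt_id t).const_mul K).exp
        simpa [mul_comm] using this
      exact he.mul (hderivφ' t ht)
    apply monotoneOn_of_deriv_nonneg (convex_Icc _ _)
    · exact (Real.continuous_exp.comp (continuous_const.mul continuous_id)).continuousOn.mul
        (hφ'cont.mono hsubT)
    · intro t ht
      rw [interior_Icc] at ht
      exact (hderivg t ht).differentiableAt.differentiableWithinAt
    · intro t ht
      rw [interior_Icc] at ht
      rw [(hderivg t ht).deriv]
      have hφ't : 0 < φ' t := hφ'pos t ht.1.le ht.2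
      obtain ⟨hφt0, hφtT⟩ := hφ0T t ⟨ht.1.le, ht.2.le⟩
      -- φ'' t ≥ -c φ t φ' t
      have hsqrt : Real.sqrt (1 + 2 * c * α * φ' t) ≤ 1 + c * α * φ' t := by
        have h1 : (1 : ℝ) + 2 * c * α * φ' t ≤ (1 + c * α * φ' t) ^ 2 := by
          nlinarith [mul_pos (mul_pos hc hα) hφ't]
        calc Real.sqrt (1 + 2 * c * α * φ' t) ≤ Real.sqrt ((1 + c * α * φ' t) ^ 2) :=
              Real.sqrt_le_sqrt h1
          _ = 1 + c * α * φ' t := Real.sqrt_sq (by positivity)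
      have hode' := hode t (hsub (hsubT ⟨ht.1.le, ht.2.le⟩))
      have hφ''ge : -(c * φ t * φ' t) ≤ φ'' t := by
        rw [hode']
        have h2 : φ t / α * (1 - Real.sqrt (1 + 2 * c * α * φ' t)) ≥
            φ t / α * (-(c * α * φ' t)) := by
          apply mul_le_mul_of_nonneg_left _ (by positivity)
          linarith
        have h3 : φ t / α * (-(c * α * φ' t)) = -(c * φ t * φ' t) := by
          field_simp
        linarith [h2, h3.symm.le]
      have hexp : 0 < Real.exp (K * t) := Real.exp_pos _
      have hKφ : c * φ t * φ' t ≤ K * φ' t := by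
        rw [hK]
        nlinarith [mul_nonneg hc.le (mul_nonneg (sub_nonneg.2 hφtT) hφ't.le)]
      nlinarith
  -- contradiction: g 0 = 1 ≤ g T ≤ 0
  have h01 : g 0 = 1 := by simp [hg, h1]
  have hgT : g T ≤ 0 := mul_nonpos_of_nonneg_of_nonpos (Real.exp_pos _).le hTA.2
  have := hgmono (left_mem_Icc.2 hT0) (right_mem_Icc.2 hT0) hT0
  rw [h01] at this
  linarith

/-- Monotonicity and positivity for the RG-2 cigar soliton profile: a twice
continuously differentiable solution of `φ'' = (φ/α)(1 − √(1 + 2cα·φ'))` on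
`[0, S)` (with `0 < S ≤ ∞`) satisfying `φ(0) = 0`, `φ'(0) = 1` has `φ > 0` and
`0 < φ' ≤ 1` on `(0, S)`, and `φ'` is strictly decreasing there. -/
theorem rg2_cigar_profile_monotonicity
    (α c : ℝ) (hα : 0 < α) (hc : 0 < c) (S : EReal) (hS : 0 < S)
    (φ φ' φ'' : ℝ → ℝ)
    (h0 : φ 0 = 0) (h1 : φ' 0 = 1)
    (hd1 : ∀ s ∈ {s : ℝ | 0 ≤ s ∧ (s : EReal) < S},
      HasDerivWithinAt φ (φ' s) {s : ℝ | 0 ≤ s ∧ (s : EReal) < S} s)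
    (hd2 : ∀ s ∈ {s : ℝ | 0 ≤ s ∧ (s : EReal) < S},
      HasDerivWithinAt φ' (φ'' s) {s : ℝ | 0 ≤ s ∧ (s : EReal) < S} s)
    (hcont : ContinuousOn φ'' {s : ℝ | 0 ≤ s ∧ (s : EReal) < S})
    (hge : ∀ s ∈ {s : ℝ | 0 ≤ s ∧ (s : EReal) < S}, 0 ≤ 1 + 2 * c * α * φ' s)
    (hode : ∀ s ∈ {s : ℝ | 0 ≤ s ∧ (s : EReal) < S},
      φ'' s = φ s / α * (1 - Real.sqrt (1 + 2 * c * α * φ' s))) :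
    (∀ s : ℝ, 0 < s → (s : EReal) < S → 0 < φ s ∧ 0 < φ' s ∧ φ' s ≤ 1) ∧
    StrictAntiOn φ' {s : ℝ | 0 < s ∧ (s : EReal) < S} := by
  set I : Set ℝ := {s : ℝ | 0 ≤ s ∧ (s : EReal) < S} with hI
  have key := rg2_key α c hα hc S φ φ' φ'' h0 h1 hd1 hd2 hode
  have hsub : ∀ b : ℝ, (b : EReal) < S → Icc (0:ℝ) b ⊆ I := by
    intro b hbS t ht
    exact ⟨ht.1, lt_of_le_of_lt (EReal.coe_le_coe_iff.2 ht.2) hbS⟩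
  have hnhds : ∀ t b : ℝ, 0 < t → t < b → (b : EReal) < S → I ∈ nhds t := by
    intro t b ht0 htb hbS
    have : Ioo (0:ℝ) b ⊆ I := fun u hu =>
      ⟨hu.1.le, lt_of_le_of_lt (EReal.coe_le_coe_iff.2 hu.2.le) hbS⟩
    exact Filter.mem_of_superset (isOpen_Ioo.mem_nhds ⟨ht0, htb⟩) this
  have hφcont : ∀ b : ℝ, (b : EReal) < S → ContinuousOn φ (Icc (0:ℝ) b) := fun b hbS t ht =>
    ((hd1 t (hsub b hbS ht)).mono (hsub b hbS)).differentiableWithinAt.continuousWithinAt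
  have hφ'cont : ∀ b : ℝ, (b : EReal) < S → ContinuousOn φ' (Icc (0:ℝ) b) := fun b hbS t ht =>
    ((hd2 t (hsub b hbS ht)).mono (hsub b hbS)).differentiableWithinAt.continuousWithinAt
  -- main pointwise claims
  have main : ∀ s : ℝ, 0 < s → (s : EReal) < S → 0 < φ s ∧ 0 < φ' s ∧ φ' s ≤ 1 := by
    intro s hs0 hsS
    have hkey := key s hs0.le hsS
    have hderivφ : ∀ t ∈ Ioo (0:ℝ) s, HasDerivAt φ (φ' t) t := fun t ht =>
      (hd1 t (hsub s hsS ⟨ht.1.le, ht.2.le⟩)).hasDerivAt (hnhds t s ht.1 ht.2 hsS)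
    have hderivφ' : ∀ t ∈ Ioo (0:ℝ) s, HasDerivAt φ' (φ'' t) t := fun t ht =>
      (hd2 t (hsub s hsS ⟨ht.1.le, ht.2.le⟩)).hasDerivAt (hnhds t s ht.1 ht.2 hsS)
    have hsm : StrictMonoOn φ (Icc (0:ℝ) s) := by
      apply strictMonoOn_of_deriv_pos (convex_Icc _ _) (hφcont s hsS)
      intro t ht
      rw [interior_Icc] at ht
      rw [(hderivφ t ht).deriv]
      exact hkey t ⟨ht.1.le, ht.2.le⟩
    have hφpos : 0 < φ s := by
      have := hsm (left_mem_Icc.2 hs0.le) (right_mem_Icc.2 hs0.le) hs0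
      rwa [h0] at this
    -- φ' s ≤ 1 via antitonicity
    have hφ0 : ∀ t ∈ Icc (0:ℝ) s, 0 ≤ φ t := by
      intro t ht
      rcases ht.1.lt_or_eq with h | h
      · have := hsm (left_mem_Icc.2 hs0.le) ht h
        rw [h0] at this; exact this.le
      · rw [← h, h0]
    have hanti : AntitoneOn φ' (Icc (0:ℝ) s) := by
      apply antitoneOn_of_deriv_nonpos (convex_Icc _ _) (hφ'cont s hsS)
      · intro t ht
        rw [interior_Icc] at ht
        exact (hderivφ' t ht).differentiableAt.differentiableWithinAt
      · intro t ht
        rw [interior_Icc] at ht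
        rw [(hderivφ' t ht).deriv, hode t (hsub s hsS ⟨ht.1.le, ht.2.le⟩)]
        have hφt : 0 ≤ φ t := hφ0 t ⟨ht.1.le, ht.2.le⟩
        have hφ't : 0 < φ' t := hkey t ⟨ht.1.le, ht.2.le⟩
        have hx : (0:ℝ) ≤ 1 + 2 * c * α * φ' t := by
          nlinarith [mul_pos (mul_pos hc hα) hφ't]
        have hsq : 1 ≤ Real.sqrt (1 + 2 * c * α * φ' t) := by
          nlinarith [Real.sq_sqrt hx, Real.sqrt_nonneg (1 + 2 * c * α * φ' t),
            mul_pos (mul_pos hc hα) hφ't]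
        apply mul_nonpos_of_nonneg_of_nonpos (by positivity)
        linarith
    have hφ'le1 : φ' s ≤ 1 := by
      have := hanti (left_mem_Icc.2 hs0.le) (right_mem_Icc.2 hs0.le) hs0.le
      rwa [h1] at this
    exact ⟨hφpos, hkey s ⟨hs0.le, le_rfl⟩, hφ'le1⟩
  refine ⟨main, ?_⟩
  -- strict antitonicity
  intro x hx y hy hxy
  have hySS : (y : EReal) < S := hy.2
  have hderivφ' : ∀ t ∈ Ioo x y, HasDerivAt φ' (φ'' t) t := fun t ht =>
    (hd2 t (hsub y hySS ⟨(hx.1.trans ht.1).le, ht.2.le⟩)).hasDerivAt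
      (hnhds t y (hx.1.trans ht.1) ht.2 hySS)
  have hsa : StrictAntiOn φ' (Icc x y) := by
    apply strictAntiOn_of_deriv_neg (convex_Icc _ _)
      ((hφ'cont y hySS).mono (Icc_subset_Icc hx.1.le le_rfl))
    intro t ht
    rw [interior_Icc] at ht
    rw [(hderivφ' t ht).deriv]
    have ht0 : 0 < t := hx.1.trans ht.1
    have htS : (t : EReal) < S := lt_of_le_of_lt (EReal.coe_le_coe_iff.2 ht.2.le) hySS
    obtain ⟨hφt, hφ't, _⟩ := main t ht0 htS
    rw [hode t ⟨ht0.le, htS⟩]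
    have hx : (0:ℝ) ≤ 1 + 2 * c * α * φ' t := by
      nlinarith [mul_pos (mul_pos hc hα) hφ't]
    have hsq : 1 < Real.sqrt (1 + 2 * c * α * φ' t) := by
      nlinarith [Real.sq_sqrt hx, Real.sqrt_nonneg (1 + 2 * c * α * φ' t),
        mul_pos (mul_pos hc hα) hφ't]
    apply mul_neg_of_pos_of_neg (by positivity)
    linarith
  exact hsa (left_mem_Icc.2 hxy.le) (right_mem_Icc.2 hxy.le) hxy
end

section
/- Let α > 0 and c > 0 be real constants, and let φ : [0, ∞) → ℝ be twice continuously differentiable with φ(0) = 0, φ'(0) = 1, 1 + 2cα·φ'(s) ≥ 0 for all s, φ(s) > 0 and φ'(s) > 0 for all s > 0, and φ''(s) = (φ(s)/α)·(1 − √(1 + 2cα·φ'(s))) for all s ≥ 0. Then φ'(s) → 0 as s → ∞, and φ is bounded on [0, ∞). -/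
open Set Filter Real

/-- Asymptotics of the RG-2 cigar soliton profile: for a global solution of
`φ'' = (φ/α)(1 − √(1 + 2cα·φ'))` on `[0, ∞)` with `φ(0) = 0`, `φ'(0) = 1`,
`φ > 0` and `φ' > 0` on `(0, ∞)`, the derivative `φ'` tends to `0` at infinity
and `φ` is bounded. -/
theorem rg2_cigar_profile_asymptotics
    (α c : ℝ) (hα : 0 < α) (hc : 0 < c)
    (φ φ' φ'' : ℝ → ℝ)
    (h0 : φ 0 = 0) (h1 : φ' 0 = 1)
    (hd1 : ∀ s ∈ Set.Ici (0 : ℝ), HasDerivWithinAt φ (φ' s) (Set.Ici 0) s)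
    (hd2 : ∀ s ∈ Set.Ici (0 : ℝ), HasDerivWithinAt φ' (φ'' s) (Set.Ici 0) s)
    (hcont : ContinuousOn φ'' (Set.Ici 0))
    (hge : ∀ s ∈ Set.Ici (0 : ℝ), 0 ≤ 1 + 2 * c * α * φ' s)
    (hφpos : ∀ s : ℝ, 0 < s → 0 < φ s)
    (hφ'pos : ∀ s : ℝ, 0 < s → 0 < φ' s)
    (hode : ∀ s ∈ Set.Ici (0 : ℝ),
      φ'' s = φ s / α * (1 - Real.sqrt (1 + 2 * c * α * φ' s))) :
    Filter.Tendsto φ' Filter.atTop (nhds 0) ∧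
    ∃ M : ℝ, ∀ s ∈ Set.Ici (0 : ℝ), |φ s| ≤ M := by
  have hint : interior (Ici (0:ℝ)) = Ioi 0 := interior_Ici
  -- nonnegativity
  have hφ'0 : ∀ s ∈ Ici (0:ℝ), 0 ≤ φ' s := by
    intro s hs
    rcases eq_or_lt_of_le (Set.mem_Ici.mp hs) with h | h
    · rw [← h, h1]; norm_num
    · exact (hφ'pos s h).le
  have hφ0 : ∀ s ∈ Ici (0:ℝ), 0 ≤ φ s := by
    intro s hs
    rcases eq_or_lt_of_le (Set.mem_Ici.mp hs) with h | h
    · rw [← h, h0]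
    · exact (hφpos s h).le
  -- continuity
  have hφcont : ContinuousOn φ (Ici 0) := fun s hs => (hd1 s hs).continuousWithinAt
  have hφ'cont : ContinuousOn φ' (Ici 0) := fun s hs => (hd2 s hs).continuousWithinAt
  -- full derivatives at interior points
  have hd1' : ∀ s ∈ Ioi (0:ℝ), HasDerivAt φ (φ' s) s := fun s hs =>
    (hd1 s (Set.mem_Ici.mpr (le_of_lt (Set.mem_Ioi.mp hs)))).hasDerivAt (Ici_mem_nhds hs)
  have hd2' : ∀ s ∈ Ioi (0:ℝ), HasDerivAt φ' (φ'' s) s := fun s hs =>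
    (hd2 s (Set.mem_Ici.mpr (le_of_lt (Set.mem_Ioi.mp hs)))).hasDerivAt (Ici_mem_nhds hs)
  -- 1 ≤ sqrt term
  have hsq1 : ∀ s ∈ Ici (0:ℝ), 1 ≤ Real.sqrt (1 + 2 * c * α * φ' s) := by
    intro s hs
    rw [Real.one_le_sqrt]
    have := mul_nonneg (mul_nonneg (by linarith : (0:ℝ) ≤ 2 * c) hα.le) (hφ'0 s hs)
    linarith
  -- φ'' ≤ 0 on [0,∞)
  have hφ''np : ∀ s ∈ Ici (0:ℝ), φ'' s ≤ 0 := by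
    intro s hs
    rw [hode s hs]
    have h1' := hsq1 s hs
    have := div_nonneg (hφ0 s hs) hα.le
    nlinarith
  -- φ' is antitone on [0,∞)
  have anti : AntitoneOn φ' (Ici 0) := by
    apply antitoneOn_of_deriv_nonpos (convex_Ici 0) hφ'cont
    · intro s hs
      rw [hint] at hs
      exact (hd2' s hs).differentiableAt.differentiableWithinAt
    · intro s hs
      rw [hint] at hs
      rw [(hd2' s hs).deriv]
      exact hφ''np s (Set.mem_Ici.mpr (Set.mem_Ioi.mp hs).le)
  have hφ'le1 : ∀ s ∈ Ici (0:ℝ), φ' s ≤ 1 := by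
    intro s hs
    have := anti (self_mem_Ici) hs hs
    rwa [h1] at this
  -- key sqrt lower bound
  set B := Real.sqrt (1 + 2 * c * α) with hB
  have hB1 : (1:ℝ) ≤ B := by
    rw [hB, Real.one_le_sqrt]; nlinarith
  set k := 2 * c * α / (1 + B) with hk
  have hkpos : 0 < k := by
    apply div_pos (by positivity)
    linarith
  have key : ∀ s ∈ Ici (0:ℝ), 1 - Real.sqrt (1 + 2 * c * α * φ' s) ≤ -(k * φ' s) := by
    intro s hs
    set A := Real.sqrt (1 + 2 * c * α * φ' s) with hA
    have hA1 : (1:ℝ) ≤ A := hsq1 s hs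
    have hA2 : A ^ 2 = 1 + 2 * c * α * φ' s := by
      rw [hA, Real.sq_sqrt (hge s hs)]
    have hAB : A ≤ B := by
      rw [hA, hB]
      apply Real.sqrt_le_sqrt
      have := mul_nonneg (mul_nonneg (by linarith : (0:ℝ) ≤ 2 * c) hα.le)
        (sub_nonneg.2 (hφ'le1 s hs))
      nlinarith
    have hBpos : (0:ℝ) < 1 + B := by linarith
    have hgoal : k * φ' s ≤ A - 1 := by
      rw [hk, div_mul_eq_mul_div, div_le_iff₀ hBpos]
      nlinarith [mul_nonneg (sub_nonneg.2 hA1) (sub_nonneg.2 hAB)]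
    linarith
  -- Lyapunov function ψ = φ' + (k/(2α)) φ²
  set ψ : ℝ → ℝ := fun s => φ' s + k / (2 * α) * (φ s) ^ 2 with hψ
  have hdψ : ∀ s ∈ Ici (0:ℝ), HasDerivWithinAt ψ
      (φ'' s + k / (2 * α) * (2 * φ s ^ 1 * φ' s)) (Ici 0) s := by
    intro s hs
    exact (hd2 s hs).add (((hd1 s hs).pow 2).const_mul _)
  have hψcont : ContinuousOn ψ (Ici 0) := fun s hs => (hdψ s hs).continuousWithinAt
  have hψderiv_np : ∀ s ∈ Ici (0:ℝ), φ'' s + k / (2 * α) * (2 * φ s ^ 1 * φ' s) ≤ 0 := by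
    intro s hs
    have hode' := hode s hs
    have hkey := key s hs
    have hφn := hφ0 s hs
    have h2 : φ s / α * (1 - Real.sqrt (1 + 2 * c * α * φ' s)) ≤
        φ s / α * (-(k * φ' s)) :=
      mul_le_mul_of_nonneg_left hkey (div_nonneg hφn hα.le)
    have h3 : k / (2 * α) * (2 * φ s ^ 1 * φ' s) = -(φ s / α * (-(k * φ' s))) := by
      field_simp
    rw [hode', h3]
    linarith
  have antiψ : AntitoneOn ψ (Ici 0) := by
    apply antitoneOn_of_deriv_nonpos (convex_Ici 0) hψcont
    · intro s hs
      rw [hint] at hs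
      exact ((hdψ s (Set.mem_Ici.mpr (Set.mem_Ioi.mp hs).le)).hasDerivAt (Ici_mem_nhds hs)).differentiableAt.differentiableWithinAt
    · intro s hs
      rw [hint] at hs
      rw [((hdψ s (Set.mem_Ici.mpr (Set.mem_Ioi.mp hs).le)).hasDerivAt (Ici_mem_nhds hs)).deriv]
      exact hψderiv_np s (Set.mem_Ici.mpr (Set.mem_Ioi.mp hs).le)
  have hψ0 : ψ 0 = 1 := by simp [hψ, h0, h1]
  -- boundedness
  set M := Real.sqrt (2 * α / k) with hM
  have hbdd : ∀ s ∈ Ici (0:ℝ), |φ s| ≤ M := by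
    intro s hs
    have hψs : ψ s ≤ 1 := by
      have := antiψ self_mem_Ici hs hs
      rwa [hψ0] at this
    have hφ's := hφ'0 s hs
    have hsq : φ s ^ 2 ≤ 2 * α / k := by
      rw [le_div_iff₀ hkpos]
      have : k / (2 * α) * φ s ^ 2 ≤ 1 := by
        simp only [hψ] at hψs; linarith
      rw [div_mul_eq_mul_div, div_le_one (by linarith : (0:ℝ) < 2 * α)] at this
      linarith
    calc |φ s| = Real.sqrt (φ s ^ 2) := (Real.sqrt_sq_eq_abs _).symm
      _ ≤ M := Real.sqrt_le_sqrt hsq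
  have hM0 : 0 ≤ M := Real.sqrt_nonneg _
  refine ⟨?_, M, hbdd⟩
  -- tendsto
  rw [Metric.tendsto_atTop]
  intro ε hε
  have hex : ∃ s₀ ∈ Ici (0:ℝ), φ' s₀ < ε := by
    by_contra hcon
    push_neg at hcon
    have mono : MonotoneOn (fun s => φ s - ε * s) (Ici 0) := by
      apply monotoneOn_of_deriv_nonneg (convex_Ici 0)
      · exact hφcont.sub (continuous_const.mul continuous_id).continuousOn
      · intro s hs
        rw [hint] at hs
        have hder : HasDerivAt (fun x => φ x - ε * x) (φ' s - ε * 1) s :=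
          (hd1' s hs).sub ((hasDerivAt_id s).const_mul ε)
        exact hder.differentiableAt.differentiableWithinAt
      · intro s hs
        rw [hint] at hs
        have hder : HasDerivAt (fun x => φ x - ε * x) (φ' s - ε * 1) s :=
          (hd1' s hs).sub ((hasDerivAt_id s).const_mul ε)
        rw [hder.deriv]
        have := hcon s (Set.mem_Ici.mpr (Set.mem_Ioi.mp hs).le)
        nlinarith
    set s₁ := (M + 1) / ε with hs₁
    have hs₁0 : (0:ℝ) ≤ s₁ := by positivity
    have := mono self_mem_Ici hs₁0 hs₁0
    simp only [h0, mul_zero, sub_zero, zero_sub] at this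
    have hεs₁ : ε * s₁ = M + 1 := by
      rw [hs₁]; field_simp
    have hb := hbdd s₁ hs₁0
    have : φ s₁ ≤ M := (le_abs_self _).trans hb
    nlinarith [mono self_mem_Ici hs₁0 hs₁0]
  obtain ⟨s₀, hs₀, hlt⟩ := hex
  refine ⟨s₀, fun s hs => ?_⟩
  have hs0 : s ∈ Ici (0:ℝ) := le_trans hs₀ hs
  have h4 : φ' s ≤ φ' s₀ := anti hs₀ hs0 hs
  rw [Real.dist_eq, sub_zero, abs_of_nonneg (hφ'0 s hs0)]
  linarith
end

section
/- Let α > 0 and c > 0 be real constants. There exists a unique twice continuously differentiable function φ : [0, ∞) → ℝ with φ(0) = 0, φ'(0) = 1, 1 + 2cα·φ'(s) > 0 for all s ≥ 0, and φ''(s) = (φ(s)/α)·(1 − √(1 + 2cα·φ'(s))) for all s ≥ 0. This solution satisfies φ(s) > 0 and 0 < φ'(s) ≤ 1 for all s > 0. -/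
/-- `φ` is a twice continuously differentiable global solution on `[0, ∞)` of
the RG-2 cigar soliton ODE `φ'' = (φ/α)(1 − √(1 + 2cα·φ'))` with `φ(0) = 0`,
`φ'(0) = 1` and `1 + 2cα·φ' > 0`. -/
def IsGlobalCigarSolution (α c : ℝ) (φ : ℝ → ℝ) : Prop :=
  φ 0 = 0 ∧ derivWithin φ (Set.Ici 0) 0 = 1 ∧
  (∀ s ∈ Set.Ici (0 : ℝ),
    HasDerivWithinAt φ (derivWithin φ (Set.Ici 0) s) (Set.Ici 0) s) ∧
  (∀ s ∈ Set.Ici (0 : ℝ),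
    HasDerivWithinAt (derivWithin φ (Set.Ici 0))
      (φ s / α * (1 - Real.sqrt (1 + 2 * c * α * derivWithin φ (Set.Ici 0) s)))
      (Set.Ici 0) s) ∧
  ContinuousOn
    (fun s => φ s / α * (1 - Real.sqrt (1 + 2 * c * α * derivWithin φ (Set.Ici 0) s)))
    (Set.Ici 0) ∧
  (∀ s ∈ Set.Ici (0 : ℝ), 0 < 1 + 2 * c * α * derivWithin φ (Set.Ici 0) s)

open Set

noncomputable section
namespace RG2

/-- cubic `F(w) = w³/3 + w²/2`. -/
def F (w : ℝ) : ℝ := w^3/3 + w^2/2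

/-- Extension of `F` to a strictly monotone surjection of `ℝ`. -/
def Ft (w : ℝ) : ℝ := if 0 ≤ w then F w else w

lemma Ft_of_nonneg {w : ℝ} (h : 0 ≤ w) : Ft w = F w := if_pos h

lemma hasDerivAt_F (w : ℝ) : HasDerivAt F (w^2 + w) w := by
  have : HasDerivAt (fun w : ℝ => w^3/3 + w^2/2) (3*w^2/3 + 2*w^1/2) w := by
    exact ((hasDerivAt_pow 3 w).div_const 3).add ((hasDerivAt_pow 2 w).div_const 2)
  show HasDerivAt (fun w : ℝ => w^3/3 + w^2/2) (w^2 + w) w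
  convert this using 1; ring

lemma strictMonoOn_F : StrictMonoOn F (Ici 0) := by
  apply strictMonoOn_of_hasDerivWithinAt_pos (convex_Ici 0)
    (fun w _ => (hasDerivAt_F w).continuousAt.continuousWithinAt)
    (fun w hw => ((hasDerivAt_F w).hasDerivWithinAt).mono interior_subset)
  intro w hw
  rw [interior_Ici] at hw
  nlinarith [hw.out]

lemma strictMono_Ft : StrictMono Ft := by
  intro x y hxy
  rcases le_or_gt 0 x with hx | hx
  · rw [Ft_of_nonneg hx, Ft_of_nonneg (hx.trans hxy.le)]
    exact strictMonoOn_F hx (hx.trans hxy.le) hxy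
  · rcases le_or_gt 0 y with hy | hy
    · rw [Ft, if_neg (not_le.2 hx), Ft_of_nonneg hy]
      have : 0 ≤ F y := by unfold F; nlinarith
      linarith
    · rw [Ft, if_neg (not_le.2 hx), Ft, if_neg (not_le.2 hy)]; exact hxy

lemma continuous_Ft : Continuous Ft := by
  have h1 : Continuous F := by unfold F; continuity
  have := Continuous.if_le (f := fun _ : ℝ => (0:ℝ)) (g := fun x : ℝ => x) h1 continuous_id
    continuous_const continuous_id (fun x hx => by simp [F, ← hx])
  exact this

lemma surjective_Ft : Function.Surjective Ft := by
  have htop : Filter.Tendsto Ft Filter.atTop Filter.atTop := by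
    apply Filter.tendsto_atTop_mono' _ _ Filter.tendsto_id
    filter_upwards [Filter.eventually_ge_atTop (3:ℝ)] with w hw
    have h0 : (0:ℝ) ≤ w := by linarith
    rw [Ft_of_nonneg h0, id]
    unfold F; nlinarith
  have hbot : Filter.Tendsto Ft Filter.atBot Filter.atBot := by
    apply Filter.Tendsto.congr' _ Filter.tendsto_id
    filter_upwards [Filter.eventually_lt_atBot (0:ℝ)] with w hw
    rw [id, Ft, if_neg (not_le.2 hw)]
  exact Continuous.surjective continuous_Ft htop hbot

/-- The order isomorphism determined by `Ft`. -/
def FtIso : ℝ ≃o ℝ := StrictMono.orderIsoOfSurjective Ft strictMono_Ft surjective_Ft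

/-- Inverse of `Ft`. -/
def Finv : ℝ → ℝ := FtIso.symm

lemma Ft_Finv (t : ℝ) : Ft (Finv t) = t := by
  exact FtIso.apply_symm_apply t

lemma Finv_Ft (w : ℝ) : Finv (Ft w) = w := by
  exact FtIso.symm_apply_apply w

lemma Finv_F {w : ℝ} (h : 0 ≤ w) : Finv (F w) = w := by
  rw [← Ft_of_nonneg h, Finv_Ft]

lemma strictMono_Finv : StrictMono Finv := fun x y h => by
  have := FtIso.symm.strictMono h; simpa [Finv] using this

lemma continuous_Finv : Continuous Finv := by
  have : Continuous (FtIso.symm : ℝ → ℝ) := OrderIso.continuous _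
  simpa [Finv] using this

lemma Finv_nonneg {t : ℝ} (h : 0 ≤ t) : 0 ≤ Finv t := by
  have : Finv (Ft 0) ≤ Finv t := (strictMono_Finv.le_iff_le).2 (by rw [Ft_of_nonneg le_rfl]; simpa [F] using h)
  simpa [Finv_Ft] using this

lemma Finv_pos {t : ℝ} (h : 0 < t) : 0 < Finv t := by
  have : Finv (Ft 0) < Finv t := strictMono_Finv (by rw [Ft_of_nonneg le_rfl]; simpa [F] using h)
  simpa [Finv_Ft] using this

lemma hasDerivAt_Finv {t : ℝ} (h : 0 < t) : HasDerivAt Finv ((Finv t)^2 + Finv t)⁻¹ t := by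
  have hw : 0 < Finv t := Finv_pos h
  have hf : HasDerivAt Ft ((Finv t)^2 + Finv t) (Finv t) := by
    refine (hasDerivAt_F (Finv t)).congr_of_eventuallyEq ?_
    filter_upwards [eventually_gt_nhds hw] with w hw'
    exact (Ft_of_nonneg hw'.le)
  exact HasDerivAt.of_local_left_inverse continuous_Finv.continuousAt hf
    (by positivity) (Filter.Eventually.of_forall Ft_Finv)

section
variable {α c : ℝ}

/-- `w₀ = √(1+2cα)`, the initial value of `w = √(1+2cαφ')`. -/
noncomputable def w0 (α c : ℝ) : ℝ := Real.sqrt (1 + 2*c*α)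

/-- The energy constant of the first integral. -/
noncomputable def E (α c : ℝ) : ℝ := F (w0 α c)

/-- `G(u)` : the value of `w` as a function of `u = φ`. -/
noncomputable def G (α c u : ℝ) : ℝ := Finv (E α c - c^2*α*u^2)

/-- The slope field: `φ' = V(φ)`. -/
noncomputable def V (α c u : ℝ) : ℝ := ((G α c u)^2 - 1)/(2*c*α)

/-- Position of the asymptotic radius. -/
noncomputable def us (α c : ℝ) : ℝ := Real.sqrt ((E α c - 5/6)/(c^2*α))

/-- Outer bound for the domain of regularity of `V`. -/
noncomputable def uM (α c : ℝ) : ℝ := Real.sqrt (E α c/(c^2*α))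

lemma w0_sq (hα : 0 < α) (hc : 0 < c) : (w0 α c)^2 = 1 + 2*c*α := by
  rw [w0, Real.sq_sqrt]; nlinarith

lemma w0_gt_one (hα : 0 < α) (hc : 0 < c) : 1 < w0 α c := by
  have h := w0_sq hα hc
  have hs : 0 ≤ w0 α c := Real.sqrt_nonneg _
  by_contra hcon
  push_neg at hcon
  have h2 : w0 α c ^ 2 ≤ 1 := by nlinarith [mul_nonneg (sub_nonneg.2 hcon) hs]
  nlinarith [mul_pos hc hα]

lemma E_gt (hα : 0 < α) (hc : 0 < c) : 5/6 < E α c := by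
  have h := w0_gt_one hα hc
  rw [E, F]; nlinarith

lemma F_one : F 1 = 5/6 := by norm_num [F]

lemma us_sq (hα : 0 < α) (hc : 0 < c) : (us α c)^2 = (E α c - 5/6)/(c^2*α) := by
  rw [us, Real.sq_sqrt]
  have h := E_gt hα hc
  have hca : (0:ℝ) < c^2*α := mul_pos (pow_pos hc 2) hα
  exact le_of_lt (div_pos (by linarith) hca)

lemma uM_sq (hα : 0 < α) (hc : 0 < c) : (uM α c)^2 = E α c/(c^2*α) := by
  rw [uM, Real.sq_sqrt]
  have h := E_gt hα hc
  have hca : (0:ℝ) < c^2*α := mul_pos (pow_pos hc 2) hα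
  exact le_of_lt (div_pos (by linarith) hca)

lemma us_pos (hα : 0 < α) (hc : 0 < c) : 0 < us α c := by
  rw [us]; apply Real.sqrt_pos.2
  have h := E_gt hα hc
  have hca : (0:ℝ) < c^2*α := mul_pos (pow_pos hc 2) hα
  exact div_pos (by linarith) hca

lemma us_lt_uM (hα : 0 < α) (hc : 0 < c) : us α c < uM α c := by
  rw [us, uM]
  have h : (0:ℝ) < c^2*α := mul_pos (pow_pos hc 2) hα
  apply Real.sqrt_lt_sqrt (le_of_lt (div_pos (by have := E_gt hα hc; linarith) h))
  rw [div_lt_div_iff₀ h h]; nlinarith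

lemma F_G (hα : 0 < α) (hc : 0 < c) {u : ℝ} (h : 0 ≤ E α c - c^2*α*u^2) :
    F (G α c u) = E α c - c^2*α*u^2 := by
  have h0 : 0 ≤ Finv (E α c - c^2*α*u^2) := Finv_nonneg h
  show F (Finv _) = _
  rw [← Ft_of_nonneg h0, Ft_Finv]

lemma arg_pos (hα : 0 < α) (hc : 0 < c) {u : ℝ} (h : u^2 < (uM α c)^2) :
    0 < E α c - c^2*α*u^2 := by
  rw [uM_sq hα hc] at h
  have h' : (0:ℝ) < c^2*α := mul_pos (pow_pos hc 2) hα
  rw [lt_div_iff₀ h'] at h; nlinarith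

lemma G_pos (hα : 0 < α) (hc : 0 < c) {u : ℝ} (h : u^2 < (uM α c)^2) :
    0 < G α c u := Finv_pos (arg_pos hα hc h)

lemma G_zero (hα : 0 < α) (hc : 0 < c) : G α c 0 = w0 α c := by
  have h0 : 0 ≤ w0 α c := Real.sqrt_nonneg _
  show Finv _ = _
  simpa [E] using Finv_F h0

lemma V_zero (hα : 0 < α) (hc : 0 < c) : V α c 0 = 1 := by
  rw [V, G_zero hα hc, w0_sq hα hc]
  field_simp
  ring

lemma G_even (u : ℝ) : G α c (-u) = G α c u := by
  show Finv _ = Finv _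
  norm_num

lemma V_even (u : ℝ) : V α c (-u) = V α c u := by
  show ((G α c (-u))^2 - 1)/(2*c*α) = _
  rw [G_even]; rfl

lemma G_le_w0 (hα : 0 < α) (hc : 0 < c) (u : ℝ) : G α c u ≤ w0 α c := by
  have h : E α c - c^2*α*u^2 ≤ Ft (w0 α c) := by
    rw [Ft_of_nonneg (show (0:ℝ) ≤ w0 α c from Real.sqrt_nonneg _)]
    have : 0 ≤ c^2*α*u^2 := by positivity
    simp only [E]; linarith
  have := strictMono_Finv.monotone h
  rwa [Finv_Ft] at this

lemma V_le_one (hα : 0 < α) (hc : 0 < c) {u : ℝ} (h : 0 ≤ E α c - c^2*α*u^2) :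
    V α c u ≤ 1 := by
  have h1 : 0 ≤ G α c u := Finv_nonneg h
  have hca : (0:ℝ) < c*α := mul_pos hc hα
  have h2 : G α c u ≤ w0 α c := G_le_w0 hα hc u
  have h3 := w0_sq hα hc
  rw [V, div_le_one (by linarith)]; nlinarith

lemma G_gt_one (hα : 0 < α) (hc : 0 < c) {u : ℝ} (h : u^2 < (us α c)^2) :
    1 < G α c u := by
  have h' : (0:ℝ) < c^2*α := mul_pos (pow_pos hc 2) hα
  rw [us_sq hα hc, lt_div_iff₀ h'] at h
  have h2 : Ft 1 < E α c - c^2*α*u^2 := by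
    rw [Ft_of_nonneg zero_le_one, F_one]; nlinarith
  have := strictMono_Finv h2
  rwa [Finv_Ft] at this

lemma V_pos (hα : 0 < α) (hc : 0 < c) {u : ℝ} (h : u^2 < (us α c)^2) :
    0 < V α c u := by
  have h1 := G_gt_one hα hc h
  have hca : (0:ℝ) < c*α := mul_pos hc hα
  rw [V]
  apply div_pos (by nlinarith) (by linarith)

lemma G_us (hα : 0 < α) (hc : 0 < c) : G α c (us α c) = 1 := by
  have h : E α c - c^2*α*(us α c)^2 = 5/6 := by
    have hca : (0:ℝ) < c^2*α := mul_pos (pow_pos hc 2) hα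
    rw [us_sq hα hc]; field_simp; ring
  show Finv _ = _
  rw [h, ← F_one, Finv_F zero_le_one]

lemma hasDerivAt_G (hα : 0 < α) (hc : 0 < c) {u : ℝ} (h : u^2 < (uM α c)^2) :
    HasDerivAt (G α c) (-(2*c^2*α*u) / ((G α c u)^2 + G α c u)) u := by
  have harg := arg_pos hα hc h
  have hinner : HasDerivAt (fun u : ℝ => E α c - c^2*α*u^2) (-(2*c^2*α*u)) u := by
    have : HasDerivAt (fun u : ℝ => E α c - c^2*α*u^2) (0 - c^2*α*(2*u^1)) u :=
      (hasDerivAt_const u (E α c)).sub ((hasDerivAt_pow 2 u).const_mul (c^2*α))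
    convert this using 1; ring
  have houter := hasDerivAt_Finv harg
  have hcomp := houter.comp u hinner
  have hfun : G α c = fun u => Finv (E α c - c^2*α*u^2) := rfl
  rw [hfun]
  exact hcomp.congr_deriv (div_eq_inv_mul _ _).symm

lemma hasDerivAt_V (hα : 0 < α) (hc : 0 < c) {u : ℝ} (h : u^2 < (uM α c)^2) :
    HasDerivAt (V α c) (-(2*c*u) / (G α c u + 1)) u := by
  have hG := G_pos hα hc h
  have := (((hasDerivAt_G hα hc h).pow 2).sub_const 1).div_const (2*c*α)
  refine this.congr_deriv ?_
  have h1 : (G α c u)^2 + G α c u ≠ 0 := by nlinarith [sq_nonneg (G α c u)]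
  have h2 : G α c u + 1 ≠ 0 := by nlinarith
  field_simp
  ring

lemma continuous_G : Continuous (G α c) := by
  have h : Continuous fun u : ℝ => E α c - c^2*α*u^2 := by continuity
  exact continuous_Finv.comp h

lemma continuous_V : Continuous (V α c) := by
  exact (((continuous_G (α := α) (c := c)).pow 2).sub continuous_const).div_const _

lemma uM_nonneg : 0 ≤ uM α c := Real.sqrt_nonneg _

lemma lipschitz_V (hα : 0 < α) (hc : 0 < c) :
    LipschitzOnWith ⟨2*c*uM α c, mul_nonneg (by linarith) uM_nonneg⟩
      (V α c) (Ioo (-(uM α c)) (uM α c)) := by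
  apply (convex_Ioo _ _).lipschitzOnWith_of_nnnorm_hasDerivWithin_le
    (f' := fun u => -(2*c*u) / (G α c u + 1))
  · intro u hu
    exact ((hasDerivAt_V hα hc (sq_lt_sq' hu.1 hu.2)).hasDerivWithinAt)
  · intro u hu
    have hG : 0 < G α c u := G_pos hα hc (sq_lt_sq' hu.1 hu.2)
    have h1 : (1:ℝ) ≤ |G α c u + 1| := by
      rw [abs_of_pos (by linarith)]; linarith
    have h2 : |(-(2*c*u))| ≤ 2*c*uM α c := by
      rw [abs_neg, abs_mul, abs_of_pos (by linarith : (0:ℝ) < 2*c)]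
      have := abs_le.2 ⟨hu.1.le, hu.2.le⟩
      nlinarith
    apply NNReal.coe_le_coe.1
    rw [coe_nnnorm, Real.norm_eq_abs, abs_div]
    change _ ≤ 2*c*uM α c
    calc |(-(2*c*u))| / |G α c u + 1| ≤ |(-(2*c*u))| / 1 := by
          apply div_le_div_of_nonneg_left (abs_nonneg _) one_pos h1
      _ = |(-(2*c*u))| := by rw [div_one]
      _ ≤ 2*c*uM α c := h2

end
end RG2
section
open Set intervalIntegral
namespace RG2
variable {α c : ℝ}

/-- Arc-length as a function of the radius: `S(u) = ∫₀ᵘ dt/V(t)`. -/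
noncomputable def S (α c u : ℝ) : ℝ := ∫ t in (0:ℝ)..u, (V α c t)⁻¹

/-- The Lipschitz-type constant in the upper bound `V(u) ≤ K(u⋆ - u)`. -/
noncomputable def Kc (α c : ℝ) : ℝ := c*(w0 α c + 1)*(us α c)/2

lemma Kc_pos (hα : 0 < α) (hc : 0 < c) : 0 < Kc α c := by
  have h1 := w0_gt_one hα hc
  have h2 := us_pos hα hc
  rw [Kc]; positivity

lemma mem_Ioo_sq {u r : ℝ} (h : u ∈ Ioo (-r) r) : u^2 < r^2 := sq_lt_sq' h.1 h.2

lemma continuousAt_Vinv (hα : 0 < α) (hc : 0 < c) {u : ℝ}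
    (h : u ∈ Ioo (-(us α c)) (us α c)) :
    ContinuousAt (fun t => (V α c t)⁻¹) u :=
  continuous_V.continuousAt.inv₀ (ne_of_gt (V_pos hα hc (mem_Ioo_sq h)))

lemma zero_mem_Ioo_us (hα : 0 < α) (hc : 0 < c) : (0:ℝ) ∈ Ioo (-(us α c)) (us α c) := by
  have := us_pos hα hc; constructor <;> linarith

lemma intervalIntegrable_Vinv (hα : 0 < α) (hc : 0 < c) {a b : ℝ}
    (ha : a ∈ Ioo (-(us α c)) (us α c)) (hb : b ∈ Ioo (-(us α c)) (us α c)) :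
    IntervalIntegrable (fun t => (V α c t)⁻¹) MeasureTheory.volume a b := by
  apply ContinuousOn.intervalIntegrable
  intro t ht
  have ht' : t ∈ Ioo (-(us α c)) (us α c) := by
    rcases le_total a b with hab | hab
    · rw [uIcc_of_le hab] at ht
      exact ⟨lt_of_lt_of_le ha.1 ht.1, lt_of_le_of_lt ht.2 hb.2⟩
    · rw [uIcc_of_ge hab] at ht
      exact ⟨lt_of_lt_of_le hb.1 ht.1, lt_of_le_of_lt ht.2 ha.2⟩
  exact (continuousAt_Vinv hα hc ht').continuousWithinAt

lemma hasDerivAt_S (hα : 0 < α) (hc : 0 < c) {u : ℝ}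
    (h : u ∈ Ioo (-(us α c)) (us α c)) :
    HasDerivAt (S α c) ((V α c u)⁻¹) u := by
  apply intervalIntegral.integral_hasDerivAt_right
    (intervalIntegrable_Vinv hα hc (zero_mem_Ioo_us hα hc) h)
  · exact ⟨_, isOpen_Ioo.mem_nhds h,
      (continuousOn_of_forall_continuousAt (fun t ht => continuousAt_Vinv hα hc ht)).aestronglyMeasurable
        measurableSet_Ioo⟩
  · exact continuousAt_Vinv hα hc h

lemma S_zero : S α c 0 = 0 := intervalIntegral.integral_same

lemma continuousOn_S (hα : 0 < α) (hc : 0 < c) :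
    ContinuousOn (S α c) (Ioo (-(us α c)) (us α c)) :=
  fun u hu => (hasDerivAt_S hα hc hu).continuousAt.continuousWithinAt

lemma strictMonoOn_S (hα : 0 < α) (hc : 0 < c) :
    StrictMonoOn (S α c) (Ioo (-(us α c)) (us α c)) := by
  apply strictMonoOn_of_hasDerivWithinAt_pos (convex_Ioo _ _) (continuousOn_S hα hc)
    (fun u hu => (hasDerivAt_S hα hc (by rwa [interior_Ioo] at hu)).hasDerivWithinAt)
  intro u hu
  rw [interior_Ioo] at hu
  exact inv_pos.2 (V_pos hα hc (mem_Ioo_sq hu))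

lemma S_neg (u : ℝ) : S α c (-u) = -(S α c u) := by
  have h1 : S α c u = ∫ t in (-u)..(0:ℝ), (V α c t)⁻¹ := by
    rw [S]
    have := intervalIntegral.integral_comp_neg (a := (0:ℝ)) (b := u)
      (fun t => (V α c t)⁻¹)
    simp only [neg_zero] at this
    rw [← this]
    congr 1
    ext t
    rw [V_even]
  rw [S, h1, ← intervalIntegral.integral_symm]

lemma V_upper (hα : 0 < α) (hc : 0 < c) {u : ℝ} (h : u ∈ Ico 0 (us α c)) :
    V α c u ≤ Kc α c * (us α c - u) := by
  have hsq : u^2 < (us α c)^2 := sq_lt_sq' (by linarith [h.1, us_pos hα hc]) h.2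
  have hsq' : u^2 < (uM α c)^2 := lt_trans hsq (by
    have h1 := us_lt_uM hα hc
    have h2 := us_pos hα hc
    nlinarith)
  have hG1 : 1 < G α c u := G_gt_one hα hc hsq
  have hGw : G α c u ≤ w0 α c := G_le_w0 hα hc u
  have hFG : F (G α c u) = E α c - c^2*α*u^2 := F_G hα hc (le_of_lt (arg_pos hα hc hsq'))
  have hcubic : 0 ≤ (G α c u - 1)^2 * (G α c u/3 + 7/6) := by positivity
  have hkey : G α c u - 1 ≤ (E α c - c^2*α*u^2 - 5/6)/2 := by
    rw [← hFG, F]; nlinarith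
  have husq := us_sq hα hc
  have hca : (0:ℝ) < c^2*α := mul_pos (pow_pos hc 2) hα
  have hE : E α c - c^2*α*u^2 - 5/6 = c^2*α*((us α c)^2 - u^2) := by
    rw [husq]; field_simp; ring
  rw [hE] at hkey
  have hw0 := w0_gt_one hα hc
  have huspos := us_pos hα hc
  rw [V, Kc, div_le_iff₀ (by positivity : (0:ℝ) < 2*c*α)]
  have hfact : (G α c u)^2 - 1 = (G α c u - 1)*(G α c u + 1) := by ring
  nlinarith [mul_le_mul hkey (by linarith : G α c u + 1 ≤ w0 α c + 1)
      (by linarith) (by nlinarith : (0:ℝ) ≤ c^2*α*((us α c)^2 - u^2)/2),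
    mul_nonneg (mul_nonneg hca.le (sub_nonneg.2 h.2.le)) (sub_nonneg.2 h.1),
    sq_nonneg (us α c - u), sq_nonneg (us α c + u), h.1, h.2]

lemma S_lower (hα : 0 < α) (hc : 0 < c) {u : ℝ} (h : u ∈ Ico 0 (us α c)) :
    (Real.log (us α c) - Real.log (us α c - u))/(Kc α c) ≤ S α c u := by
  have hK := Kc_pos hα hc
  have huspos := us_pos hα hc
  have hu' : u ∈ Ioo (-(us α c)) (us α c) := ⟨by linarith [h.1], h.2⟩
  -- the antiderivative of the comparison integrand
  set g : ℝ → ℝ := fun t => -(Real.log (us α c - t))/(Kc α c) with hg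
  have hgderiv : ∀ t ∈ Icc 0 u, HasDerivAt g ((Kc α c * (us α c - t))⁻¹) t := by
    intro t ht
    have htu : us α c - t > 0 := by
      rcases ht with ⟨h1, h2⟩; have := h.2; linarith
    have hlog : HasDerivAt (fun t => Real.log (us α c - t)) ((us α c - t)⁻¹ * (-1)) t := by
      have hin : HasDerivAt (fun t : ℝ => us α c - t) (-1) t := by
        simpa using (hasDerivAt_id t).const_sub (us α c)
      exact (Real.hasDerivAt_log (ne_of_gt htu)).comp t hin
    have := (hlog.neg).div_const (Kc α c)
    refine this.congr_deriv ?_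
    field_simp
  have hcontcomp : ContinuousOn (fun t => (Kc α c * (us α c - t))⁻¹) (Icc 0 u) := by
    intro t ht
    apply ContinuousWithinAt.inv₀
    · exact (continuous_const.mul (continuous_const.sub continuous_id)).continuousWithinAt
    · rcases ht with ⟨h1, h2⟩
      have : us α c - t > 0 := by have := h.2; linarith
      positivity
  have hint : ∫ t in (0:ℝ)..u, (Kc α c * (us α c - t))⁻¹ =
      g u - g 0 := by
    apply intervalIntegral.integral_eq_sub_of_hasDerivAt
    · intro t ht
      rw [uIcc_of_le h.1] at ht
      exact hgderiv t ht
    · apply ContinuousOn.intervalIntegrable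
      rwa [uIcc_of_le h.1]
  have hmono : ∫ t in (0:ℝ)..u, (Kc α c * (us α c - t))⁻¹ ≤ S α c u := by
    rw [S]
    apply intervalIntegral.integral_mono_on h.1
      (by apply ContinuousOn.intervalIntegrable; rwa [uIcc_of_le h.1])
      (intervalIntegrable_Vinv hα hc (zero_mem_Ioo_us hα hc) hu')
    intro t ht
    have ht' : t ∈ Ico 0 (us α c) := ⟨ht.1, lt_of_le_of_lt ht.2 h.2⟩
    have hVpos : 0 < V α c t := V_pos hα hc
      (sq_lt_sq' (by linarith [ht'.1, huspos]) ht'.2)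
    exact inv_anti₀ hVpos (V_upper hα hc ht')
  have : g u - g 0 = (Real.log (us α c) - Real.log (us α c - u))/(Kc α c) := by
    rw [hg]; simp only [sub_zero]; ring
  linarith [hint ▸ hmono, this ▸ (hint ▸ hmono)]

lemma exists_S_ge (hα : 0 < α) (hc : 0 < c) {s : ℝ} (hs : 0 ≤ s) :
    ∃ u ∈ Ico 0 (us α c), s ≤ S α c u := by
  have hK := Kc_pos hα hc
  have huspos := us_pos hα hc
  refine ⟨us α c - us α c * Real.exp (-(Kc α c * s)), ⟨?_, ?_⟩, ?_⟩
  · have h1 : Real.exp (-(Kc α c * s)) ≤ 1 := Real.exp_le_one_iff.2 (by nlinarith)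
    nlinarith
  · have h1 : 0 < Real.exp (-(Kc α c * s)) := Real.exp_pos _
    nlinarith
  · have hlow := S_lower hα hc (u := us α c - us α c * Real.exp (-(Kc α c * s)))
      ⟨by nlinarith [Real.exp_le_one_iff.2 (by nlinarith : -(Kc α c * s) ≤ 0)],
       by nlinarith [Real.exp_pos (-(Kc α c * s))]⟩
    have heq : us α c - (us α c - us α c * Real.exp (-(Kc α c * s)))
        = us α c * Real.exp (-(Kc α c * s)) := by ring
    rw [heq, Real.log_mul (ne_of_gt huspos) (ne_of_gt (Real.exp_pos _)),
      Real.log_exp] at hlow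
    have : (Real.log (us α c) - (Real.log (us α c) + -(Kc α c * s)))/(Kc α c) = s := by
      field_simp
      ring
    linarith [this ▸ hlow]

lemma exists_S_eq (hα : 0 < α) (hc : 0 < c) (s : ℝ) :
    ∃ u ∈ Ioo (-(us α c)) (us α c), S α c u = s := by
  have huspos := us_pos hα hc
  have key : ∀ s' : ℝ, 0 ≤ s' → ∃ u ∈ Ioo (-(us α c)) (us α c), S α c u = s' := by
    intro s' hs'
    obtain ⟨u1, hu1, hSu1⟩ := exists_S_ge hα hc hs'
    have hu1' : u1 ∈ Ioo (-(us α c)) (us α c) := ⟨by linarith [hu1.1], hu1.2⟩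
    have hcont : ContinuousOn (S α c) (Icc 0 u1) := by
      apply (continuousOn_S hα hc).mono
      intro t ht
      exact ⟨by linarith [ht.1], lt_of_le_of_lt ht.2 hu1.2⟩
    have := intermediate_value_Icc hu1.1 hcont
    have hmem : s' ∈ Icc (S α c 0) (S α c u1) := by
      rw [S_zero]; exact ⟨hs', hSu1⟩
    obtain ⟨u, hu, hSu⟩ := this hmem
    exact ⟨u, ⟨by linarith [hu.1], lt_of_le_of_lt hu.2 hu1.2⟩, hSu⟩
  rcases le_or_gt 0 s with hs | hs
  · exact key s hs
  · obtain ⟨u, hu, hSu⟩ := key (-s) (by linarith)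
    refine ⟨-u, ⟨by linarith [hu.2], by linarith [hu.1]⟩, ?_⟩
    rw [S_neg, hSu, neg_neg]

/-- The soliton profile `φ`, defined as the inverse of `S`. -/
noncomputable def phi (α c s : ℝ) : ℝ :=
  if h : 0 < α ∧ 0 < c then (exists_S_eq h.1 h.2 s).choose else 0

lemma phi_spec (hα : 0 < α) (hc : 0 < c) (s : ℝ) :
    phi α c s ∈ Ioo (-(us α c)) (us α c) ∧ S α c (phi α c s) = s := by
  rw [phi, dif_pos ⟨hα, hc⟩]
  exact (exists_S_eq hα hc s).choose_spec

lemma phi_eq_of (hα : 0 < α) (hc : 0 < c) {s u : ℝ}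
    (hu : u ∈ Ioo (-(us α c)) (us α c)) (hS : S α c u = s) : phi α c s = u := by
  obtain ⟨h1, h2⟩ := phi_spec hα hc s
  exact ((strictMonoOn_S hα hc).injOn h1 hu (by rw [h2, hS]))

lemma phi_zero (hα : 0 < α) (hc : 0 < c) : phi α c 0 = 0 :=
  phi_eq_of hα hc (zero_mem_Ioo_us hα hc) S_zero

lemma phi_strictMono (hα : 0 < α) (hc : 0 < c) : StrictMono (phi α c) := by
  intro s1 s2 h12
  by_contra hcon
  push_neg at hcon
  obtain ⟨hm1, hS1⟩ := phi_spec hα hc s1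
  obtain ⟨hm2, hS2⟩ := phi_spec hα hc s2
  rcases eq_or_lt_of_le hcon with heq | hlt
  · rw [heq] at hS2; rw [hS2] at hS1; linarith
  · have := strictMonoOn_S hα hc hm2 hm1 hlt
    rw [hS1, hS2] at this; linarith

end RG2
end



section
open Set
namespace RG2
variable {α c : ℝ}

lemma continuousAt_phi (hα : 0 < α) (hc : 0 < c) (s : ℝ) :
    ContinuousAt (phi α c) s := by
  rw [Metric.continuousAt_iff]
  intro ε hε
  obtain ⟨ha, hSa⟩ := phi_spec hα hc s
  set a := phi α c s with hadef
  set ε' : ℝ := min ε (min ((us α c - a)/2) ((a + us α c)/2)) with hε'def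
  have hε'pos : 0 < ε' := by
    apply lt_min hε
    apply lt_min <;> · rcases ha with ⟨h1, h2⟩; linarith
  have hm1 : a - ε' ∈ Ioo (-(us α c)) (us α c) := by
    constructor
    · have : ε' ≤ (a + us α c)/2 := le_trans (min_le_right _ _) (min_le_right _ _)
      rcases ha with ⟨h1, h2⟩; linarith
    · rcases ha with ⟨h1, h2⟩; linarith
  have hm2 : a + ε' ∈ Ioo (-(us α c)) (us α c) := by
    constructor
    · rcases ha with ⟨h1, h2⟩; linarith
    · have : ε' ≤ (us α c - a)/2 := le_trans (min_le_right _ _) (min_le_left _ _)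
      rcases ha with ⟨h1, h2⟩; linarith
  have hlt1 : S α c (a - ε') < s := by
    rw [← hSa]; exact strictMonoOn_S hα hc hm1 ha (by linarith)
  have hlt2 : s < S α c (a + ε') := by
    rw [← hSa]; exact strictMonoOn_S hα hc ha hm2 (by linarith)
  refine ⟨min (s - S α c (a - ε')) (S α c (a + ε') - s), by
    apply lt_min <;> linarith, ?_⟩
  intro x hx
  rw [Real.dist_eq] at hx
  have hx1 : S α c (a - ε') < x := by
    have := abs_lt.1 hx
    have h2 := min_le_left (s - S α c (a - ε')) (S α c (a + ε') - s)
    linarith [this.1]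
  have hx2 : x < S α c (a + ε') := by
    have := abs_lt.1 hx
    have h2 := min_le_right (s - S α c (a - ε')) (S α c (a + ε') - s)
    linarith [this.2]
  obtain ⟨hb, hSb⟩ := phi_spec hα hc x
  have hεε : ε' ≤ ε := min_le_left _ _
  rw [Real.dist_eq, abs_lt]
  constructor
  · by_contra hcon
    push_neg at hcon
    have : S α c (phi α c x) ≤ S α c (a - ε') :=
      (strictMonoOn_S hα hc).monotoneOn hb hm1 (by linarith)
    rw [hSb] at this; linarith
  · by_contra hcon
    push_neg at hcon
    have : S α c (a + ε') ≤ S α c (phi α c x) :=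
      (strictMonoOn_S hα hc).monotoneOn hm2 hb (by linarith)
    rw [hSb] at this; linarith

lemma V_phi_pos (hα : 0 < α) (hc : 0 < c) (s : ℝ) : 0 < V α c (phi α c s) :=
  V_pos hα hc (mem_Ioo_sq (phi_spec hα hc s).1)

lemma hasDerivAt_phi (hα : 0 < α) (hc : 0 < c) (s : ℝ) :
    HasDerivAt (phi α c) (V α c (phi α c s)) s := by
  have hmem := (phi_spec hα hc s).1
  have hS := hasDerivAt_S hα hc hmem
  have h := HasDerivAt.of_local_left_inverse (continuousAt_phi hα hc s) hS
    (inv_ne_zero (ne_of_gt (V_phi_pos hα hc s)))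
    (Filter.Eventually.of_forall fun y => (phi_spec hα hc y).2)
  simpa [inv_inv] using h

lemma derivWithin_phi (hα : 0 < α) (hc : 0 < c) {s : ℝ} (hs : s ∈ Ici (0:ℝ)) :
    derivWithin (phi α c) (Ici 0) s = V α c (phi α c s) :=
  ((hasDerivAt_phi hα hc s).hasDerivWithinAt).derivWithin (uniqueDiffOn_Ici 0 s hs)

lemma us_sq_lt_uM_sq (hα : 0 < α) (hc : 0 < c) : (us α c)^2 < (uM α c)^2 := by
  have h1 := us_lt_uM hα hc
  have h2 := us_pos hα hc
  nlinarith

lemma phi_sq_lt (hα : 0 < α) (hc : 0 < c) (s : ℝ) : (phi α c s)^2 < (uM α c)^2 :=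
  lt_trans (mem_Ioo_sq (phi_spec hα hc s).1) (us_sq_lt_uM_sq hα hc)

lemma sqrt_key (hα : 0 < α) (hc : 0 < c) {u : ℝ} (h : u^2 < (uM α c)^2) :
    Real.sqrt (1 + 2*c*α*(V α c u)) = G α c u := by
  have hG := G_pos hα hc h
  have hca : (0:ℝ) < c*α := mul_pos hc hα
  have heq : 1 + 2*c*α*(V α c u) = (G α c u)^2 := by
    rw [V]; field_simp
    ring
  rw [heq, Real.sqrt_sq hG.le]

lemma hasDerivAt_Vphi (hα : 0 < α) (hc : 0 < c) (s : ℝ) :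
    HasDerivAt (fun t => V α c (phi α c t))
      (phi α c s / α * (1 - Real.sqrt (1 + 2*c*α*(V α c (phi α c s))))) s := by
  have hsq := phi_sq_lt hα hc s
  have h := (hasDerivAt_V hα hc hsq).comp s (hasDerivAt_phi hα hc s)
  refine h.congr_deriv ?_
  rw [sqrt_key hα hc hsq, V]
  have hG := G_pos hα hc hsq
  have hca : (0:ℝ) < c*α := mul_pos hc hα
  field_simp
  ring

lemma continuous_Vphi (hα : 0 < α) (hc : 0 < c) :
    Continuous (fun t => V α c (phi α c t)) :=
  continuous_V.comp (continuous_iff_continuousAt.2 (continuousAt_phi hα hc))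

lemma one_add_eq_sq (hα : 0 < α) (hc : 0 < c) (s : ℝ) :
    1 + 2*c*α*(V α c (phi α c s)) = (G α c (phi α c s))^2 := by
  have hca : (0:ℝ) < c*α := mul_pos hc hα
  rw [V]; field_simp
  ring

lemma isGlobalCigarSolution_phi (hα : 0 < α) (hc : 0 < c) :
    IsGlobalCigarSolution α c (phi α c) := by
  have hDW : ∀ s ∈ Ici (0:ℝ), derivWithin (phi α c) (Ici 0) s = V α c (phi α c s) :=
    fun s hs => derivWithin_phi hα hc hs
  refine ⟨phi_zero hα hc, ?_, ?_, ?_, ?_, ?_⟩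
  · rw [derivWithin_phi hα hc (le_refl (0:ℝ)), phi_zero hα hc, V_zero hα hc]
  · intro s hs
    rw [hDW s hs]
    exact (hasDerivAt_phi hα hc s).hasDerivWithinAt
  · intro s hs
    have h := ((hasDerivAt_Vphi hα hc s).hasDerivWithinAt (s := Ici 0)).congr
      (fun y hy => (hDW y hy)) (hDW s hs)
    rw [hDW s hs]
    exact h
  · apply ContinuousOn.congr (f := fun t =>
      phi α c t / α * (1 - Real.sqrt (1 + 2*c*α*(V α c (phi α c t)))))
    · apply Continuous.continuousOn
      apply Continuous.mul
      · exact (continuous_iff_continuousAt.2 (continuousAt_phi hα hc)).div_const α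
      · exact continuous_const.sub ((Real.continuous_sqrt).comp
          (continuous_const.add (continuous_const.mul (continuous_Vphi hα hc))))
    · intro s hs
      simp only []
      rw [hDW s hs]
  · intro s hs
    rw [hDW s hs, one_add_eq_sq hα hc]
    have := G_pos hα hc (phi_sq_lt hα hc s)
    positivity

end RG2
end
section
open Set
namespace RG2
variable {α c : ℝ}

lemma mem_Ioo_of_sq_lt {x r : ℝ} (h : x^2 < r^2) (hr : 0 ≤ r) : x ∈ Ioo (-r) r := by
  constructor <;> nlinarith

/-- Any solution satisfies the first integral
`F(√(1+2cαψ')) + c²αψ² = E` and hence the first-order ODE `ψ' = V(ψ)`. -/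
lemma solution_first_order (hα : 0 < α) (hc : 0 < c) {ψ : ℝ → ℝ}
    (hψ : IsGlobalCigarSolution α c ψ) :
    ∀ s ∈ Ici (0:ℝ),
      derivWithin ψ (Ici 0) s = V α c (ψ s) ∧ (ψ s)^2 < (uM α c)^2 := by
  obtain ⟨hψ0, hp0, hd1, hd2, _hcont, hpos⟩ := hψ
  set p := derivWithin ψ (Ici 0) with hp
  set H : ℝ → ℝ := fun s => F (Real.sqrt (1 + 2*c*α*(p s))) + c^2*α*(ψ s)^2 with hH
  -- H has zero derivative on Ici 0
  have hHderiv : ∀ s ∈ Ici (0:ℝ), HasDerivWithinAt H 0 (Ici 0) s := by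
    intro s hs
    set w := Real.sqrt (1 + 2*c*α*(p s)) with hwdef
    have hqpos : 0 < 1 + 2*c*α*(p s) := hpos s hs
    have hwpos : 0 < w := Real.sqrt_pos.2 hqpos
    have hw2 : w^2 = 1 + 2*c*α*(p s) := Real.sq_sqrt hqpos.le
    have hq : HasDerivWithinAt (fun t => 1 + 2*c*α*(p t))
        (2*c*α*(ψ s / α * (1 - Real.sqrt (1 + 2*c*α*(p s))))) (Ici 0) s := by
      have := (hasDerivWithinAt_const s (Ici (0:ℝ)) 1).add ((hd2 s hs).const_mul (2*c*α))
      exact this.congr_deriv (by ring)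
    have hsqrt : HasDerivWithinAt (fun t => Real.sqrt (1 + 2*c*α*(p t)))
        ((1/(2*w)) * (2*c*α*(ψ s / α * (1 - w)))) (Ici 0) s := by
      have := (Real.hasDerivAt_sqrt (ne_of_gt hqpos)).comp_hasDerivWithinAt s hq
      exact this
    have hFw : HasDerivWithinAt (fun t => F (Real.sqrt (1 + 2*c*α*(p t))))
        ((w^2 + w) * ((1/(2*w)) * (2*c*α*(ψ s / α * (1 - w))))) (Ici 0) s :=
      by
        have h := (hasDerivAt_F (Real.sqrt (1 + 2*c*α*(p s)))).comp_hasDerivWithinAt s hsqrt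
        rw [← hwdef] at h
        exact h
    have hsq2 : HasDerivWithinAt (fun t => c^2*α*(ψ t)^2)
        (c^2*α*(2*(ψ s)^1*(p s))) (Ici 0) s := by
      have h1 : HasDerivWithinAt (fun t => (ψ t)^2) (2*(ψ s)^1*(p s)) (Ici 0) s :=
        by simpa using (hd1 s hs).fun_pow 2
      exact h1.const_mul (c^2*α)
    have htotal := hFw.add hsq2
    have hzero : (w^2 + w) * ((1/(2*w)) * (2*c*α*(ψ s / α * (1 - w))))
        + c^2*α*(2*(ψ s)^1*(p s)) = 0 := by
      have hps : 2*c*α*(p s) = w^2 - 1 := by rw [hw2]; ring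
      have h1 : (w^2 + w) * ((1/(2*w)) * (2*c*α*(ψ s / α * (1 - w))))
          = c * ψ s * (1+w) * (1-w) := by
        field_simp
        ring
      rw [h1]
      linear_combination (c * ψ s) * hps
    rw [hzero] at htotal
    exact htotal
  -- hence H is constant, equal to E
  have hHcont : ContinuousOn H (Ici 0) :=
    fun s hs => (hHderiv s hs).continuousWithinAt
  have hH0 : H 0 = E α c := by
    rw [hH]; simp only [hψ0, hp0]
    rw [E, w0]; norm_num
  have hHconst : ∀ s ∈ Ici (0:ℝ), H s = E α c := by
    intro s hs
    rw [← hH0]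
    refine constant_of_has_deriv_right_zero (f := H) (a := 0) (b := s)
      (hHcont.mono Icc_subset_Ici_self) ?_ s (by exact ⟨hs, le_refl s⟩)
    intro x hx
    exact (hHderiv x hx.1).mono (Ici_subset_Ici.2 hx.1)
  -- deduce the first-order equation
  intro s hs
  set w := Real.sqrt (1 + 2*c*α*(p s)) with hwdef
  have hqpos : 0 < 1 + 2*c*α*(p s) := hpos s hs
  have hwpos : 0 < w := Real.sqrt_pos.2 hqpos
  have hw2 : w^2 = 1 + 2*c*α*(p s) := Real.sq_sqrt hqpos.le
  have hFE : F w = E α c - c^2*α*(ψ s)^2 := by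
    have := hHconst s hs
    rw [hH] at this
    simp only [← hwdef] at this
    linarith
  have hFwpos : 0 < F w := by rw [F]; positivity
  have hca : (0:ℝ) < c^2*α := mul_pos (pow_pos hc 2) hα
  have hsqlt : (ψ s)^2 < (uM α c)^2 := by
    rw [uM_sq hα hc, lt_div_iff₀ hca]
    nlinarith
  refine ⟨?_, hsqlt⟩
  have hwG : w = G α c (ψ s) := by
    have h1 : Ft w = E α c - c^2*α*(ψ s)^2 := by rw [Ft_of_nonneg hwpos.le, hFE]
    have := congrArg Finv h1
    rwa [Finv_Ft] at this
  have : p s = (w^2 - 1)/(2*c*α) := by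
    rw [hw2]; field_simp
    ring
  rw [this, hwG, V]

/-- Uniqueness: any global solution agrees with `phi` on `[0, ∞)`. -/
lemma solution_unique (hα : 0 < α) (hc : 0 < c) {ψ : ℝ → ℝ}
    (hψ : IsGlobalCigarSolution α c ψ) : EqOn ψ (phi α c) (Ici 0) := by
  have hfo := solution_first_order hα hc hψ
  obtain ⟨hψ0, hp0, hd1, hd2, _hcont, hpos⟩ := hψ
  intro s hs
  have hs0 : (0:ℝ) ≤ s := hs
  have := ODE_solution_unique_of_mem_Icc_right
    (v := fun _ x => V α c x) (s := fun _ => Ioo (-(uM α c)) (uM α c))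
    (K := ⟨2*c*uM α c, mul_nonneg (by linarith) uM_nonneg⟩)
    (f := ψ) (g := phi α c) (a := 0) (b := s)
    (fun _ _ => lipschitz_V hα hc)
    (fun x hx => ((hd1 x hx.1).continuousWithinAt).mono
      (fun y hy => hy.1 : Icc (0:ℝ) s ⊆ Ici 0))
    (fun t ht => by
      have h1 := (hd1 t ht.1).mono (Ici_subset_Ici.2 ht.1)
      rwa [(hfo t ht.1).1] at h1)
    (fun t ht => mem_Ioo_of_sq_lt (hfo t ht.1).2 uM_nonneg)
    (fun x _ => (hasDerivAt_phi hα hc x).continuousAt.continuousWithinAt)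
    (fun t _ => ((hasDerivAt_phi hα hc t).hasDerivWithinAt).mono (fun y hy => hy))
    (fun t _ => mem_Ioo_of_sq_lt (phi_sq_lt hα hc t) uM_nonneg)
    (by rw [hψ0, phi_zero hα hc])
  exact this ⟨hs0, le_refl s⟩

end RG2
end
/-- Existence and uniqueness of the RG-2 cigar soliton profile: there is a
unique global solution on `[0, ∞)`, and it satisfies `φ > 0` and `0 < φ' ≤ 1`
on `(0, ∞)`. -/
theorem rg2_cigar_global_existence_uniqueness
    (α c : ℝ) (hα : 0 < α) (hc : 0 < c) :
    (∃ φ : ℝ → ℝ, IsGlobalCigarSolution α c φ ∧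
      ∀ ψ : ℝ → ℝ, IsGlobalCigarSolution α c ψ → Set.EqOn ψ φ (Set.Ici 0)) ∧
    (∀ φ : ℝ → ℝ, IsGlobalCigarSolution α c φ → ∀ s : ℝ, 0 < s →
      0 < φ s ∧ 0 < derivWithin φ (Set.Ici 0) s ∧
        derivWithin φ (Set.Ici 0) s ≤ 1) := by
  constructor
  · exact ⟨RG2.phi α c, RG2.isGlobalCigarSolution_phi hα hc,
      fun ψ hψ => RG2.solution_unique hα hc hψ⟩
  · intro φ hφ s hspos
    have hEq := RG2.solution_unique hα hc hφ
    have hs : s ∈ Set.Ici (0:ℝ) := le_of_lt hspos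
    have hφs : φ s = RG2.phi α c s := hEq hs
    have hder : derivWithin φ (Set.Ici 0) s = derivWithin (RG2.phi α c) (Set.Ici 0) s :=
      derivWithin_congr hEq (hEq hs)
    refine ⟨?_, ?_, ?_⟩
    · rw [hφs, ← RG2.phi_zero hα hc]
      exact RG2.phi_strictMono hα hc hspos
    · rw [hder, RG2.derivWithin_phi hα hc hs]
      exact RG2.V_phi_pos hα hc s
    · rw [hder, RG2.derivWithin_phi hα hc hs]
      exact RG2.V_le_one hα hc (le_of_lt (RG2.arg_pos hα hc (RG2.phi_sq_lt hα hc s)))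
end
end
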